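/- arXiv:2005.12960 — 7 statements merged into one kernel-verified Lean document; each statement's English description precedes it below -/
import Mathlib

section
/- Let B be an invertible bounded linear operator on a complex Hilbert space H. Then inf_{λ ∈ ℂ} ‖I − λB‖ = inf_{λ ∈ ℂ} ‖I − λB⁻¹‖, where I is the identity operator and the norm is the operator norm. -/
open scoped InnerProductSpace

/-- Key vector inequality: if `‖b - a‖ ≤ r * ‖b‖` with `0 ≤ r ≤ 1`, then
`‖a - (1 - r²) • b‖ ≤ r * ‖a‖`. -/
lemma key_vector_ineq {H : Type*} [NormedAddCommGroup H] [InnerProductSpace ℂ H]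
    (r : ℝ) (hr0 : 0 ≤ r) (hr1 : r ≤ 1) (a b : H) (h : ‖b - a‖ ≤ r * ‖b‖) :
    ‖a - ((1 - r ^ 2 : ℝ) : ℂ) • b‖ ≤ r * ‖a‖ := by
  have h2 : ‖b - a‖ ^ 2 ≤ (r * ‖b‖) ^ 2 :=
    pow_le_pow_left₀ (norm_nonneg _) h 2
  have e1 : ‖b - a‖ ^ 2 = ‖b‖ ^ 2 - 2 * Complex.re ⟪b, a⟫_ℂ + ‖a‖ ^ 2 :=
    norm_sub_sq (𝕜 := ℂ) b a
  have e2 : ‖a - ((1 - r ^ 2 : ℝ) : ℂ) • b‖ ^ 2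
      = ‖a‖ ^ 2 - 2 * ((1 - r ^ 2) * Complex.re ⟪a, b⟫_ℂ)
        + (1 - r ^ 2) ^ 2 * ‖b‖ ^ 2 := by
    rw [norm_sub_sq (𝕜 := ℂ)]
    rw [inner_smul_right]
    rw [norm_smul]
    have hn : ‖((1 - r ^ 2 : ℝ) : ℂ)‖ = 1 - r ^ 2 := by
      rw [Complex.norm_real, Real.norm_eq_abs, abs_of_nonneg (by nlinarith)]
    rw [hn]
    have hre' : RCLike.re (((1 - r ^ 2 : ℝ) : ℂ) * ⟪a, b⟫_ℂ)
        = (1 - r ^ 2) * Complex.re ⟪a, b⟫_ℂ := by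
      simp [RCLike.re_to_complex, Complex.mul_re, ← Complex.ofReal_pow]
    rw [hre']
    ring
  have hre : Complex.re ⟪b, a⟫_ℂ = Complex.re ⟪a, b⟫_ℂ := by
    have : ⟪b, a⟫_ℂ = starRingEnd ℂ ⟪a, b⟫_ℂ := (inner_conj_symm b a).symm
    rw [this, Complex.conj_re]
  have h3 : ‖a - ((1 - r ^ 2 : ℝ) : ℂ) • b‖ ^ 2 ≤ (r * ‖a‖) ^ 2 := by
    rw [e2]
    rw [e1, hre] at h2
    nlinarith [mul_le_mul_of_nonneg_left h2 (by nlinarith : (0:ℝ) ≤ 1 - r ^ 2),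
      norm_nonneg a, norm_nonneg b]
  have := Real.sqrt_le_sqrt h3
  rwa [Real.sqrt_sq (norm_nonneg _), Real.sqrt_sq (by positivity)] at this

lemma iInf_symm_le {H : Type*} [NormedAddCommGroup H] [InnerProductSpace ℂ H]
    [CompleteSpace H] (B : H ≃L[ℂ] H) :
    (⨅ mu : ℂ, ‖(1 : H →L[ℂ] H) - mu • (B.symm : H →L[ℂ] H)‖) ≤
      ⨅ lam : ℂ, ‖(1 : H →L[ℂ] H) - lam • (B : H →L[ℂ] H)‖ := by
  have bdd : BddBelow (Set.range fun mu : ℂ =>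
      ‖(1 : H →L[ℂ] H) - mu • (B.symm : H →L[ℂ] H)‖) := by
    refine ⟨0, ?_⟩
    rintro _ ⟨mu, rfl⟩
    exact norm_nonneg _
  refine le_ciInf fun lam => ?_
  set r : ℝ := ‖(1 : H →L[ℂ] H) - lam • (B : H →L[ℂ] H)‖ with hrdef
  have hr0 : 0 ≤ r := norm_nonneg _
  by_cases hr : 1 ≤ r
  · refine le_trans (ciInf_le_of_le bdd 0 ?_) hr
    simp only [zero_smul, sub_zero]
    exact ContinuousLinearMap.norm_id_le.trans_eq (by simp [ContinuousLinearMap.one_def])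
  · push_neg at hr
    by_cases hlam : lam = 0
    · subst hlam
      refine ciInf_le_of_le bdd 0 ?_
      simp [hrdef]
    · refine ciInf_le_of_le bdd (((1 - r ^ 2 : ℝ) : ℂ) / lam) ?_
      refine ContinuousLinearMap.opNorm_le_bound _ hr0 fun y => ?_
      have hx : ∀ x : H, ‖x - lam • (B : H →L[ℂ] H) x‖ ≤ r * ‖x‖ := fun x => by
        simpa using ((1 : H →L[ℂ] H) - lam • (B : H →L[ℂ] H)).le_opNorm x
      set x : H := lam⁻¹ • (B.symm y) with hxdef
      have hTx : lam • (B : H →L[ℂ] H) x = y := by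
        simp [hxdef, smul_smul, mul_inv_cancel₀ hlam]
      have hkey := key_vector_ineq r hr0 hr.le (lam • (B : H →L[ℂ] H) x) x
        (by simpa using hx x)
      rw [hTx] at hkey
      have hcx : ((1 - r ^ 2 : ℝ) : ℂ) • x
          = (((1 - r ^ 2 : ℝ) : ℂ) / lam) • (B.symm : H →L[ℂ] H) y := by
        simp [hxdef, smul_smul, div_eq_mul_inv]
      rw [hcx] at hkey
      simpa using hkey

/-- Proposition 3.1, second equality in (3.1):
`inf_{λ ∈ ℂ} ‖I - λB‖ = inf_{λ ∈ ℂ} ‖I - λB⁻¹‖` for an invertible bounded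
operator `B` on a complex Hilbert space. -/
theorem iInf_norm_one_sub_smul_eq_inv
    {H : Type*} [NormedAddCommGroup H] [InnerProductSpace ℂ H] [CompleteSpace H]
    (B : H ≃L[ℂ] H) :
    (⨅ lam : ℂ, ‖(1 : H →L[ℂ] H) - lam • (B : H →L[ℂ] H)‖) =
      ⨅ lam : ℂ, ‖(1 : H →L[ℂ] H) - lam • (B.symm : H →L[ℂ] H)‖ := by
  have h1 := iInf_symm_le B
  have h2 := iInf_symm_le B.symm
  rw [ContinuousLinearEquiv.symm_symm] at h2
  exact le_antisymm h2 h1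
end

section
/- Let H be a nonzero complex Hilbert space and let B be an invertible bounded linear operator on H. Then the linear reduction factor satisfies M_B ≤ √(1 − ν_B·ν_{B⁻¹}). -/
noncomputable def gmresRes {H : Type*} [NormedAddCommGroup H] [NormedSpace ℂ H]
    (T : H →L[ℂ] H) (r0 : H) (k : ℕ) : ℝ :=
  sInf {x : ℝ | ∃ p : Polynomial ℂ,
    p.natDegree ≤ k ∧ p.eval 0 = 1 ∧ x = ‖(Polynomial.aeval T p) r0‖}

/-- The linear reduction factor `M_B`: the infimum of the constants `M ≥ 0`
such that every GMRES residual sequence for `B` satisfies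
`‖r_k‖ ≤ M * ‖r_{k-1}‖`. -/
noncomputable def linRed {H : Type*} [NormedAddCommGroup H] [NormedSpace ℂ H]
    (B : H →L[ℂ] H) : ℝ :=
  sInf {M : ℝ | 0 ≤ M ∧ ∀ (z : H) (k : ℕ), gmresRes B z (k + 1) ≤ M * gmresRes B z k}

/-- The numerical range (field of values) of a bounded operator `T`:
`W(T) = { ⟨Tz, z⟩ : ‖z‖ = 1 }`, where the inner ℂ product `⟨·,·⟩` is linear in
its first argument (so `⟨Tz, z⟩` is `inner z (T z)` in Mathlib's convention). -/
def numRange {H : Type*} [NormedAddCommGroup H] [InnerProductSpace ℂ H]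
    (T : H →L[ℂ] H) : Set ℂ :=
  {c | ∃ z : H, ‖z‖ = 1 ∧ c = (inner ℂ z (T z) : ℂ)}

/-- `ν_T = inf { |λ| : λ ∈ W(T) }`. -/
noncomputable def nu {H : Type*} [NormedAddCommGroup H] [InnerProductSpace ℂ H]
    (T : H →L[ℂ] H) : ℝ :=
  sInf {x : ℝ | ∃ c ∈ numRange T, x = ‖c‖}

namespace GmresAuxStarke

variable {H : Type*} [NormedAddCommGroup H] [InnerProductSpace ℂ H]

lemma nu_nonneg (T : H →L[ℂ] H) : 0 ≤ nu T :=
  Real.sInf_nonneg (by rintro x ⟨c, _, rfl⟩; positivity)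

lemma nu_le_of_unit (T : H →L[ℂ] H) {z : H} (hz : ‖z‖ = 1) :
    nu T ≤ ‖(inner ℂ z (T z) : ℂ)‖ :=
  csInf_le ⟨0, by rintro x ⟨c, _, rfl⟩; positivity⟩ ⟨_, ⟨z, hz, rfl⟩, rfl⟩

lemma nu_le (T : H →L[ℂ] H) {w : H} (hw : w ≠ 0) :
    nu T * ‖w‖ ^ 2 ≤ ‖(inner ℂ w (T w) : ℂ)‖ := by
  have hn : ‖w‖ ≠ 0 := norm_ne_zero_iff.mpr hw
  have hz : ‖(‖w‖⁻¹ : ℂ) • w‖ = 1 := by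
    rw [norm_smul]; simp [hn]
  have h := nu_le_of_unit T hz
  have hc : (inner ℂ ((‖w‖⁻¹ : ℂ) • w) (T ((‖w‖⁻¹ : ℂ) • w)) : ℂ)
      = (‖w‖⁻¹ : ℂ) ^ 2 * inner ℂ w (T w) := by
    rw [map_smul, inner_smul_left, inner_smul_right, ← Complex.ofReal_inv,
      Complex.conj_ofReal]
    ring
  rw [hc, norm_mul] at h
  have hns : ‖((‖w‖ : ℂ)⁻¹) ^ 2‖ = (‖w‖ ^ 2)⁻¹ := by
    rw [norm_pow, norm_inv, Complex.norm_real, Real.norm_eq_abs, abs_of_nonneg (norm_nonneg w),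
      inv_pow]
  rw [hns] at h
  have hp : (0:ℝ) < ‖w‖ ^ 2 := by positivity
  have hc2 := mul_inv_cancel₀ (ne_of_gt hp)
  nlinarith [norm_nonneg (inner ℂ w (T w) : ℂ)]

lemma gmresRes_nonneg (T : H →L[ℂ] H) (z : H) (k : ℕ) : 0 ≤ gmresRes T z k :=
  Real.sInf_nonneg (by rintro x ⟨p, _, _, rfl⟩; positivity)

lemma gmresRes_le (T : H →L[ℂ] H) (z : H) (k : ℕ) {p : Polynomial ℂ}
    (hd : p.natDegree ≤ k) (h0 : p.eval 0 = 1) :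
    gmresRes T z k ≤ ‖(Polynomial.aeval T p) z‖ :=
  csInf_le ⟨0, by rintro x ⟨q, _, _, rfl⟩; positivity⟩ ⟨p, hd, h0, rfl⟩

lemma gmresRes_set_nonempty (T : H →L[ℂ] H) (z : H) (k : ℕ) :
    {x : ℝ | ∃ p : Polynomial ℂ,
      p.natDegree ≤ k ∧ p.eval 0 = 1 ∧ x = ‖(Polynomial.aeval T p) z‖}.Nonempty :=
  ⟨‖z‖, 1, by simp⟩

lemma key_step [CompleteSpace H] (B : H ≃L[ℂ] H) {w : H} (hw : w ≠ 0) :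
    ∃ α : ℂ, ‖w - α • ((B : H →L[ℂ] H) w)‖ ≤
      Real.sqrt (1 - nu (B : H →L[ℂ] H) * nu (B.symm : H →L[ℂ] H)) * ‖w‖ := by
  set u := (B : H →L[ℂ] H) w with hu_def
  have hu : u ≠ 0 := by
    simp only [hu_def]
    intro h
    exact hw (by simpa using congrArg B.symm h)
  set c : ℂ := inner ℂ u w with hc_def
  have hup : (0:ℝ) < ‖u‖ ^ 2 := pow_pos (norm_pos_iff.mpr hu) 2
  have hwp : (0:ℝ) < ‖w‖ ^ 2 := pow_pos (norm_pos_iff.mpr hw) 2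
  refine ⟨c / (‖u‖ ^ 2 : ℂ), ?_⟩
  set α : ℂ := c / (‖u‖ ^ 2 : ℂ) with hα_def
  -- norm squared computation
  have hsq : ‖w - α • u‖ ^ 2 = ‖w‖ ^ 2 - ‖c‖ ^ 2 / ‖u‖ ^ 2 := by
    rw [@norm_sub_sq ℂ]
    have h1 : (inner ℂ w (α • u) : ℂ) = α * inner ℂ w u := inner_smul_right _ _ _
    have h2 : (inner ℂ w u : ℂ) = starRingEnd ℂ c := by rw [hc_def, ← inner_conj_symm]
    have hnn : ‖((‖u‖ : ℂ)) ^ 2‖ = ‖u‖ ^ 2 := by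
      rw [norm_pow, Complex.norm_real, Real.norm_eq_abs, abs_of_nonneg (norm_nonneg u)]
    have h3 : ‖α • u‖ ^ 2 = ‖c‖ ^ 2 / ‖u‖ ^ 2 := by
      rw [norm_smul, mul_pow, hα_def, norm_div, hnn]
      field_simp
    have h4 : (Complex.re (α * starRingEnd ℂ c)) = ‖c‖ ^ 2 / ‖u‖ ^ 2 := by
      have hmc : α * starRingEnd ℂ c = ((‖c‖ ^ 2 / ‖u‖ ^ 2 : ℝ) : ℂ) := by
        rw [hα_def, div_mul_eq_mul_div, Complex.mul_conj, Complex.normSq_eq_norm_sq]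
        push_cast
        ring
      rw [hmc, Complex.ofReal_re]
    rw [h1, h2, h3]
    simp only [RCLike.re_to_complex]
    rw [h4]
    ring
  -- bound the Rayleigh quotients
  have hb1 : nu (B : H →L[ℂ] H) * ‖w‖ ^ 2 ≤ ‖c‖ := by
    have := nu_le (B : H →L[ℂ] H) hw
    rwa [show ‖(inner ℂ w ((B : H →L[ℂ] H) w) : ℂ)‖ = ‖c‖ by
      rw [hc_def, ← inner_conj_symm, RCLike.norm_conj]] at this
  have hb2 : nu (B.symm : H →L[ℂ] H) * ‖u‖ ^ 2 ≤ ‖c‖ := by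
    have := nu_le (B.symm : H →L[ℂ] H) hu
    rwa [show ((B.symm : H →L[ℂ] H) u) = w by simp [hu_def]] at this
  have hν1 := nu_nonneg (B : H →L[ℂ] H)
  have hν2 := nu_nonneg (B.symm : H →L[ℂ] H)
  have hprod : nu (B : H →L[ℂ] H) * nu (B.symm : H →L[ℂ] H) * ‖w‖ ^ 2
      ≤ ‖c‖ ^ 2 / ‖u‖ ^ 2 := by
    have hmm := mul_le_mul hb1 hb2 (by positivity) (norm_nonneg c)
    rw [le_div_iff₀ hup]
    nlinarith [hmm]
  have hfin : ‖w - α • u‖ ^ 2 ≤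
      (1 - nu (B : H →L[ℂ] H) * nu (B.symm : H →L[ℂ] H)) * ‖w‖ ^ 2 := by
    rw [hsq]; nlinarith
  calc ‖w - α • u‖ = Real.sqrt (‖w - α • u‖ ^ 2) := by
        rw [Real.sqrt_sq (norm_nonneg _)]
    _ ≤ Real.sqrt ((1 - nu (B : H →L[ℂ] H) * nu (B.symm : H →L[ℂ] H)) * ‖w‖ ^ 2) :=
        Real.sqrt_le_sqrt hfin
    _ = Real.sqrt (1 - nu (B : H →L[ℂ] H) * nu (B.symm : H →L[ℂ] H)) * ‖w‖ := by
        rw [Real.sqrt_mul' _ (by positivity : (0:ℝ) ≤ ‖w‖ ^ 2),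
          Real.sqrt_sq (norm_nonneg w)]

lemma step_bound [CompleteSpace H] (B : H ≃L[ℂ] H) (z : H) (k : ℕ) :
    gmresRes (B : H →L[ℂ] H) z (k + 1) ≤
      Real.sqrt (1 - nu (B : H →L[ℂ] H) * nu (B.symm : H →L[ℂ] H)) * gmresRes (B : H →L[ℂ] H) z k := by
  set M := Real.sqrt (1 - nu (B : H →L[ℂ] H) * nu (B.symm : H →L[ℂ] H)) with hM
  have hM0 : 0 ≤ M := Real.sqrt_nonneg _
  -- for each element of S_k, gmresRes (k+1) ≤ M * x
  have hkey : ∀ x ∈ {x : ℝ | ∃ p : Polynomial ℂ,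
      p.natDegree ≤ k ∧ p.eval 0 = 1 ∧ x = ‖(Polynomial.aeval (B : H →L[ℂ] H) p) z‖},
      gmresRes (B : H →L[ℂ] H) z (k + 1) ≤ M * x := by
    rintro x ⟨p, hd, h0, rfl⟩
    set w := (Polynomial.aeval (B : H →L[ℂ] H) p) z with hw_def
    by_cases hw : w = 0
    · have := gmresRes_le (B : H →L[ℂ] H) z (k + 1) (le_trans hd (Nat.le_succ k)) h0
      rw [← hw_def, hw, norm_zero] at this
      rw [hw, norm_zero, mul_zero]
      simpa using this
    · obtain ⟨α, hα⟩ := key_step B hw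
      set q : Polynomial ℂ := (1 - Polynomial.C α * Polynomial.X) * p with hq_def
      have hqd : q.natDegree ≤ k + 1 := by
        refine le_trans (Polynomial.natDegree_mul_le) ?_
        have h1 : (1 - Polynomial.C α * Polynomial.X : Polynomial ℂ).natDegree ≤ 1 := by
          refine le_trans (Polynomial.natDegree_sub_le _ _) ?_
          simp [Polynomial.natDegree_C_mul_le]
          exact le_trans (Polynomial.natDegree_C_mul_le _ _) (by simp)
        omega
      have hq0 : q.eval 0 = 1 := by
        simp [hq_def, h0]
      have hqe : (Polynomial.aeval (B : H →L[ℂ] H) q) z = w - α • ((B : H →L[ℂ] H) w) := by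
        rw [hq_def, map_mul, ContinuousLinearMap.mul_apply, ← hw_def, map_sub, map_mul,
          Polynomial.aeval_X, Polynomial.aeval_C, map_one]
        simp [ContinuousLinearMap.sub_apply, Algebra.algebraMap_eq_smul_one,
          ContinuousLinearMap.smul_apply, ContinuousLinearMap.one_apply,
          ContinuousLinearMap.mul_apply]
      have := gmresRes_le (B : H →L[ℂ] H) z (k + 1) hqd hq0
      rw [hqe] at this
      exact le_trans this hα
  -- conclude
  rcases eq_or_lt_of_le hM0 with hM0' | hM0'
  · obtain ⟨x, hx⟩ := gmresRes_set_nonempty (B : H →L[ℂ] H) z k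
    have := hkey x hx
    rw [← hM0'] at this ⊢
    calc gmresRes (B : H →L[ℂ] H) z (k+1) ≤ 0 * x := this
      _ = 0 * gmresRes (B : H →L[ℂ] H) z k := by ring
  · have hle : gmresRes (B : H →L[ℂ] H) z (k + 1) / M ≤ gmresRes (B : H →L[ℂ] H) z k := by
      refine le_csInf (gmresRes_set_nonempty _ z k) ?_
      intro x hx
      rw [div_le_iff₀ hM0', mul_comm]
      exact hkey x hx
    calc gmresRes (B : H →L[ℂ] H) z (k + 1)
        = M * (gmresRes (B : H →L[ℂ] H) z (k + 1) / M) := by field_simp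
      _ ≤ M * gmresRes (B : H →L[ℂ] H) z k := by
          exact mul_le_mul_of_nonneg_left hle hM0


end GmresAuxStarke

/-- Proposition 3.1, bound (3.1) (Starke / Eiermann–Ernst):
`M_B ≤ sqrt(1 - ν_B ν_{B⁻¹})`. -/
theorem linRed_le_sqrt_one_sub_nu_mul_nu_inv
    {H : Type*} [NormedAddCommGroup H] [InnerProductSpace ℂ H] [CompleteSpace H]
    [Nontrivial H] (B : H ≃L[ℂ] H) :
    linRed (B : H →L[ℂ] H) ≤
      Real.sqrt (1 - nu (B : H →L[ℂ] H) * nu (B.symm : H →L[ℂ] H)) := by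
  exact csInf_le ⟨0, fun _ hx => hx.1⟩
    ⟨Real.sqrt_nonneg _, fun z k => GmresAuxStarke.step_bound B z k⟩
end

section
/- Let H be a nonzero complex Hilbert space and let B be an invertible bounded linear operator on H. Then the linear reduction factor satisfies M_B ≤ √(1 − ν_B²/‖B‖²) (Elman's bound). -/
section Aux

open Polynomial

variable {H : Type*} [NormedAddCommGroup H] [InnerProductSpace ℂ H]

lemma nu_nonneg' (T : H →L[ℂ] H) : 0 ≤ nu T :=
  Real.sInf_nonneg (fun _ ⟨c, _, hx⟩ => hx ▸ norm_nonneg c)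

lemma nu_le' (T : H →L[ℂ] H) {z : H} (hz : ‖z‖ = 1) : nu T ≤ ‖(inner ℂ z (T z) : ℂ)‖ :=
  csInf_le ⟨0, fun _ ⟨c, _, hx⟩ => hx ▸ norm_nonneg c⟩ ⟨_, ⟨z, hz, rfl⟩, rfl⟩

lemma elman_key_step (B : H ≃L[ℂ] H) (r : H) :
    ∃ α : ℂ, ‖r - α • (B : H →L[ℂ] H) r‖ ≤
      Real.sqrt (1 - nu (B : H →L[ℂ] H) ^ 2 / ‖(B : H →L[ℂ] H)‖ ^ 2) * ‖r‖ := by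
  set T := (B : H →L[ℂ] H) with hT
  rcases eq_or_ne r 0 with rfl | hr
  · exact ⟨0, by simp⟩
  have hrpos : (0:ℝ) < ‖r‖ := norm_pos_iff.mpr hr
  have hBr : T r ≠ 0 := fun h => hr (B.injective (by simpa [hT] using h))
  have hBrpos : (0:ℝ) < ‖T r‖ := norm_pos_iff.mpr hBr
  have hle : ‖T r‖ ≤ ‖T‖ * ‖r‖ := T.le_opNorm r
  have hTpos : (0:ℝ) < ‖T‖ := by
    by_contra h
    push_neg at h
    have : ‖T‖ = 0 := le_antisymm h (norm_nonneg _)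
    rw [this, zero_mul] at hle
    exact absurd hle (not_le.mpr hBrpos)
  set t : ℂ := inner ℂ r (T r) with ht
  set α : ℂ := (starRingEnd ℂ) t / ((‖T r‖:ℂ) ^ 2) with hα
  refine ⟨α, ?_⟩
  -- step 1: squared identity
  have hb2 : ((‖T r‖:ℂ) ^ 2) ≠ 0 :=
    pow_ne_zero 2 (Complex.ofReal_ne_zero.mpr hBrpos.ne')
  have hαt : α * t = ((‖t‖ ^ 2 / ‖T r‖ ^ 2 : ℝ) : ℂ) := by
    rw [hα, div_mul_eq_mul_div]
    rw [show (starRingEnd ℂ) t * t = ((‖t‖^2 : ℝ) : ℂ) by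
      rw [mul_comm, Complex.mul_conj]
      norm_cast
      rw [Complex.normSq_eq_norm_sq]]
    push_cast
    ring
  have hnα : ‖α‖ = ‖t‖ / ‖T r‖ ^ 2 := by
    rw [hα, norm_div, RCLike.norm_conj]
    congr 1
    rw [norm_pow, Complex.norm_real]
    simp [abs_of_nonneg (norm_nonneg (T r))]
  have hsq : ‖r - α • T r‖ ^ 2 = ‖r‖ ^ 2 - ‖t‖ ^ 2 / ‖T r‖ ^ 2 := by
    rw [@norm_sub_sq ℂ, inner_smul_right, ← ht, hαt, norm_smul, hnα]
    have hre : RCLike.re (((‖t‖ ^ 2 / ‖T r‖ ^ 2 : ℝ)) : ℂ) = ‖t‖ ^ 2 / ‖T r‖ ^ 2 := by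
      simp
      norm_cast
    rw [hre]
    field_simp
    ring
  -- step 2: nu bound
  have hν : nu T * ‖r‖ ^ 2 ≤ ‖t‖ := by
    set u : H := ((‖r‖:ℂ))⁻¹ • r with hu
    have hu1 : ‖u‖ = 1 := by
      rw [hu, norm_smul, norm_inv, Complex.norm_real, Real.norm_eq_abs,
        abs_of_pos hrpos, inv_mul_cancel₀ hrpos.ne']
    have hiu : (inner ℂ u (T u) : ℂ) = ((‖r‖:ℂ))⁻¹ * ((starRingEnd ℂ) ((‖r‖:ℂ))⁻¹) * t := by
      rw [hu, map_smul, inner_smul_left, inner_smul_right, ← ht]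
      ring
    have hthis : nu T ≤ ‖(inner ℂ u (T u) : ℂ)‖ := nu_le' T hu1
    rw [hiu] at hthis
    have hnorm : ‖((‖r‖:ℂ))⁻¹ * ((starRingEnd ℂ) ((‖r‖:ℂ))⁻¹) * t‖ = ‖t‖ / ‖r‖ ^ 2 := by
      rw [norm_mul, norm_mul, RCLike.norm_conj, norm_inv, Complex.norm_real,
        Real.norm_eq_abs, abs_of_pos hrpos]
      field_simp
      try ring
      try tauto
    rw [hnorm, le_div_iff₀ (by positivity)] at hthis
    linarith [hthis]
  have hν0 : 0 ≤ nu T := nu_nonneg' T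
  -- step 3: combine
  have hkey : nu T ^ 2 * ‖r‖ ^ 2 / ‖T‖ ^ 2 ≤ ‖t‖ ^ 2 / ‖T r‖ ^ 2 := by
    have h1 : (nu T * ‖r‖ ^ 2) ^ 2 ≤ ‖t‖ ^ 2 :=
      pow_le_pow_left₀ (by positivity) hν 2
    have h2 : ‖T r‖ ^ 2 ≤ (‖T‖ * ‖r‖) ^ 2 :=
      pow_le_pow_left₀ (norm_nonneg _) hle 2
    have h3 : (nu T * ‖r‖ ^ 2) ^ 2 / (‖T‖ * ‖r‖) ^ 2 ≤ ‖t‖ ^ 2 / ‖T r‖ ^ 2 :=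
      div_le_div₀ (by positivity) h1 (by positivity) h2
    calc nu T ^ 2 * ‖r‖ ^ 2 / ‖T‖ ^ 2 = (nu T * ‖r‖ ^ 2) ^ 2 / (‖T‖ * ‖r‖) ^ 2 := by
          field_simp
      _ ≤ _ := h3
  have hsq' : ‖r - α • T r‖ ^ 2 ≤ ‖r‖ ^ 2 * (1 - nu T ^ 2 / ‖T‖ ^ 2) := by
    rw [hsq]
    have heq : ‖r‖ ^ 2 * (1 - nu T ^ 2 / ‖T‖ ^ 2)
        = ‖r‖ ^ 2 - nu T ^ 2 * ‖r‖ ^ 2 / ‖T‖ ^ 2 := by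
      field_simp
    rw [heq]
    linarith
  calc ‖r - α • T r‖ = Real.sqrt (‖r - α • T r‖ ^ 2) := (Real.sqrt_sq (norm_nonneg _)).symm
    _ ≤ Real.sqrt (‖r‖ ^ 2 * (1 - nu T ^ 2 / ‖T‖ ^ 2)) := Real.sqrt_le_sqrt hsq'
    _ = Real.sqrt (1 - nu T ^ 2 / ‖T‖ ^ 2) * ‖r‖ := by
        rw [Real.sqrt_mul (sq_nonneg _), Real.sqrt_sq (norm_nonneg _), mul_comm]

variable [CompleteSpace H]

lemma gmresSet_nonempty (T : H →L[ℂ] H) (z : H) (k : ℕ) :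
    {x : ℝ | ∃ p : Polynomial ℂ,
      p.natDegree ≤ k ∧ p.eval 0 = 1 ∧ x = ‖(Polynomial.aeval T p) z‖}.Nonempty :=
  ⟨‖z‖, 1, by simp⟩

lemma gmresSet_bddBelow (T : H →L[ℂ] H) (z : H) (k : ℕ) :
    BddBelow {x : ℝ | ∃ p : Polynomial ℂ,
      p.natDegree ≤ k ∧ p.eval 0 = 1 ∧ x = ‖(Polynomial.aeval T p) z‖} :=
  ⟨0, fun _ ⟨_, _, _, hx⟩ => hx ▸ norm_nonneg _⟩

end Aux

open Pointwise

/-- Proposition 3.1, Elman's bound: `M_B ≤ sqrt(1 - ν_B² / ‖B‖²)`. -/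
theorem linRed_le_sqrt_one_sub_nu_sq_div_norm_sq
    {H : Type*} [NormedAddCommGroup H] [InnerProductSpace ℂ H] [CompleteSpace H]
    [Nontrivial H] (B : H ≃L[ℂ] H) :
    linRed (B : H →L[ℂ] H) ≤
      Real.sqrt (1 - nu (B : H →L[ℂ] H) ^ 2 / ‖(B : H →L[ℂ] H)‖ ^ 2) := by
  classical
  set T := (B : H →L[ℂ] H) with hT
  set M := Real.sqrt (1 - nu T ^ 2 / ‖T‖ ^ 2) with hM
  have hM0 : 0 ≤ M := Real.sqrt_nonneg _
  have hmem : M ∈ {M : ℝ | 0 ≤ M ∧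
      ∀ (z : H) (k : ℕ), gmresRes T z (k + 1) ≤ M * gmresRes T z k} := by
    refine ⟨hM0, fun z k => ?_⟩
    set S : Set ℝ := {x : ℝ | ∃ p : Polynomial ℂ,
      p.natDegree ≤ k ∧ p.eval 0 = 1 ∧ x = ‖(Polynomial.aeval T p) z‖} with hS
    have hstep : ∀ x ∈ S, gmresRes T z (k + 1) ≤ M * x := by
      rintro x ⟨q, hqdeg, hq0, rfl⟩
      set r : H := (Polynomial.aeval T q) z with hrdef
      obtain ⟨α, hα⟩ := elman_key_step B r
      set p : Polynomial ℂ := (1 - Polynomial.C α * Polynomial.X) * q with hp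
      have hpdeg : p.natDegree ≤ k + 1 := by
        refine le_trans (Polynomial.natDegree_mul_le) ?_
        have h1 : (1 - Polynomial.C α * Polynomial.X).natDegree ≤ 1 := by
          refine le_trans (Polynomial.natDegree_sub_le _ _) ?_
          simp [Polynomial.natDegree_C_mul_le]
          exact le_trans (Polynomial.natDegree_mul_le)
            (by simp [Polynomial.natDegree_X_le])
        omega
      have hp0 : p.eval 0 = 1 := by
        simp [hp, hq0]
      have hpz : (Polynomial.aeval T p) z = r - α • T r := by
        rw [hp, map_mul]
        have h1 : Polynomial.aeval T (1 - Polynomial.C α * Polynomial.X)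
            = 1 - α • T := by
          simp [map_sub, Polynomial.aeval_C, Algebra.algebraMap_eq_smul_one,
            smul_mul_assoc]
        rw [h1, ContinuousLinearMap.mul_apply]
        simp [hrdef]
      have hmem' : ‖(Polynomial.aeval T p) z‖ ∈ {x : ℝ | ∃ p : Polynomial ℂ,
          p.natDegree ≤ k + 1 ∧ p.eval 0 = 1 ∧ x = ‖(Polynomial.aeval T p) z‖} :=
        ⟨p, hpdeg, hp0, rfl⟩
      calc gmresRes T z (k + 1) ≤ ‖(Polynomial.aeval T p) z‖ :=
            csInf_le (gmresSet_bddBelow T z (k + 1)) hmem'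
        _ = ‖r - α • T r‖ := by rw [hpz]
        _ ≤ M * ‖r‖ := hα
    -- conclude via scaled infimum
    have hgm : gmresRes T z k = sInf S := rfl
    rw [hgm, show M * sInf S = sInf (M • S) from (Real.sInf_smul_of_nonneg hM0 S).symm]
    refine le_csInf ((gmresSet_nonempty T z k).smul_set) ?_
    rintro b ⟨x, hx, rfl⟩
    simpa [smul_eq_mul] using hstep x hx
  exact csInf_le ⟨0, fun x hx => hx.1⟩ hmem
end

section
/- Let B be an invertible bounded linear operator on a complex Hilbert space H. Then ν_B > 0 if and only if ν_{B⁻¹} > 0. -/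
lemma nu_inv_pos_of_nu_pos
    {H : Type*} [NormedAddCommGroup H] [InnerProductSpace ℂ H] [CompleteSpace H]
    (B : H ≃L[ℂ] H) (h : 0 < nu (B : H →L[ℂ] H)) :
    0 < nu (B.symm : H →L[ℂ] H) := by
  set S := {x : ℝ | ∃ c ∈ numRange (B : H →L[ℂ] H), x = ‖c‖} with hSdef
  have hbdd : BddBelow S := ⟨0, by rintro x ⟨c, _, rfl⟩; exact norm_nonneg c⟩
  -- S is nonempty, else nu B = 0
  have hS : S.Nonempty := by
    by_contra hne
    rw [Set.not_nonempty_iff_eq_empty] at hne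
    have h' : (0:ℝ) < sInf S := h
    rw [hne, Real.sInf_empty] at h'
    exact lt_irrefl 0 h'
  obtain ⟨x0, c0, ⟨z0, hz0, hc0⟩, hx0⟩ := hS
  have hz0ne : z0 ≠ 0 := fun hh => by simp [hh] at hz0
  have hBpos : 0 < ‖(B : H →L[ℂ] H)‖ := by
    have h1 : B z0 ≠ 0 := fun hh => hz0ne (B.injective (by simpa using hh))
    have h2 : 0 < ‖B z0‖ := norm_pos_iff.mpr h1
    have h3 : ‖(B : H →L[ℂ] H) z0‖ ≤ ‖(B : H →L[ℂ] H)‖ * ‖z0‖ :=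
      (B : H →L[ℂ] H).le_opNorm z0
    simp only [ContinuousLinearEquiv.coe_coe, hz0, mul_one] at h3
    linarith
  set ν := nu (B : H →L[ℂ] H) with hν
  have hkey : ∀ b ∈ {x : ℝ | ∃ c ∈ numRange (B.symm : H →L[ℂ] H), x = ‖c‖},
      ν / ‖(B : H →L[ℂ] H)‖ ^ 2 ≤ b := by
    rintro b ⟨c, ⟨w, hw, hc⟩, rfl⟩
    set u := B.symm w with hu
    have hune : u ≠ 0 := by
      intro hh
      have : w = 0 := by
        have := congrArg B hh
        simpa [hu] using this
      simp [this] at hw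
    have hun : 0 < ‖u‖ := norm_pos_iff.mpr hune
    set z := (‖u‖⁻¹ : ℂ) • u with hzdef
    have hz : ‖z‖ = 1 := by
      simp [hzdef, norm_smul, hun.ne']
    have h1 : ν ≤ ‖(inner ℂ z ((B : H →L[ℂ] H) z) : ℂ)‖ :=
      csInf_le hbdd ⟨_, ⟨z, hz, rfl⟩, rfl⟩
    have huz : u = (‖u‖ : ℂ) • z := by
      rw [hzdef, smul_smul]
      rw [mul_inv_cancel₀ (by exact_mod_cast hun.ne')]
      simp
    have hwBu : w = B u := by simp [hu]
    -- compute the inner product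
    have hcval : (inner ℂ w ((B.symm : H →L[ℂ] H) w) : ℂ)
        = (starRingEnd ℂ (‖u‖ : ℂ)) * ((‖u‖ : ℂ) * inner ℂ ((B : H →L[ℂ] H) z) z) := by
      have : (inner ℂ w ((B.symm : H →L[ℂ] H) w) : ℂ) = inner ℂ (B u) u := by
        rw [ContinuousLinearEquiv.coe_coe, ← hu, hwBu]
      rw [this]
      nth_rewrite 1 [huz]
      nth_rewrite 2 [huz]
      rw [map_smul, inner_smul_left, inner_smul_right]
      simp
    have hnormc : ‖c‖ = ‖u‖ ^ 2 * ‖(inner ℂ z ((B : H →L[ℂ] H) z) : ℂ)‖ := by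
      rw [hc, hcval]
      rw [norm_mul, norm_mul, RCLike.norm_conj]
      have hswap : ‖(inner ℂ ((B : H →L[ℂ] H) z) z : ℂ)‖
          = ‖(inner ℂ z ((B : H →L[ℂ] H) z) : ℂ)‖ := by
        rw [← inner_conj_symm, RCLike.norm_conj]
      rw [hswap]
      simp [Complex.norm_real, abs_of_nonneg hun.le]
      ring
    have hunorm : 1 ≤ ‖(B : H →L[ℂ] H)‖ * ‖u‖ := by
      have h3 : ‖(B : H →L[ℂ] H) u‖ ≤ ‖(B : H →L[ℂ] H)‖ * ‖u‖ :=
        (B : H →L[ℂ] H).le_opNorm u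
      have : ‖(B : H →L[ℂ] H) u‖ = 1 := by
        rw [ContinuousLinearEquiv.coe_coe, ← hwBu, hw]
      linarith
    rw [hnormc]
    rw [div_le_iff₀ (by positivity)]
    have hν0 : 0 ≤ ν := le_of_lt h
    nlinarith [norm_nonneg (inner ℂ z ((B : H →L[ℂ] H) z) : ℂ), hun.le,
      norm_nonneg (B : H →L[ℂ] H), mul_le_mul hunorm hunorm zero_le_one
        (by positivity : (0:ℝ) ≤ ‖(B : H →L[ℂ] H)‖ * ‖u‖)]
  have hS' : {x : ℝ | ∃ c ∈ numRange (B.symm : H →L[ℂ] H), x = ‖c‖}.Nonempty :=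
    ⟨_, ⟨_, ⟨z0, hz0, rfl⟩, rfl⟩⟩
  have := le_csInf hS' hkey
  have hpos : 0 < ν / ‖(B : H →L[ℂ] H)‖ ^ 2 := by positivity
  calc (0:ℝ) < ν / ‖(B : H →L[ℂ] H)‖ ^ 2 := hpos
    _ ≤ nu (B.symm : H →L[ℂ] H) := this

/-- Proposition 3.1, equivalence (L2) ⇔ (L3): `ν_B > 0` iff `ν_{B⁻¹} > 0`. -/
theorem nu_pos_iff_nu_inv_pos
    {H : Type*} [NormedAddCommGroup H] [InnerProductSpace ℂ H] [CompleteSpace H]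
    (B : H ≃L[ℂ] H) :
    0 < nu (B : H →L[ℂ] H) ↔ 0 < nu (B.symm : H →L[ℂ] H) := by
  constructor
  · exact nu_inv_pos_of_nu_pos B
  · intro h
    have := nu_inv_pos_of_nu_pos B.symm h
    simpa using this
end

section
/- Let B be an invertible bounded linear operator on a complex Hilbert space H. Then B exhibits strictly monotone GMRES convergence (for every r0 ∈ H and every k ≥ 1, either ‖r_k^{B,r0}‖ < ‖r_{k-1}^{B,r0}‖ or ‖r_{k-1}^{B,r0}‖ = 0) if and only if 0 ∉ W(B). -/
open Polynomial

section Aux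
set_option linter.unusedSectionVars false
variable {H : Type*} [NormedAddCommGroup H] [InnerProductSpace ℂ H] [CompleteSpace H]

local notation "⟪" x ", " y "⟫" => @inner ℂ _ _ x y

lemma gmres_bddBelow (T : H →L[ℂ] H) (r0 : H) (k : ℕ) :
    BddBelow {x : ℝ | ∃ p : Polynomial ℂ,
      p.natDegree ≤ k ∧ p.eval 0 = 1 ∧ x = ‖(Polynomial.aeval T p) r0‖} := by
  refine ⟨0, fun x hx => ?_⟩
  obtain ⟨p, -, -, hx⟩ := hx
  rw [hx]; exact norm_nonneg _

lemma gmres_set_nonempty (T : H →L[ℂ] H) (r0 : H) (k : ℕ) :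
    Set.Nonempty {x : ℝ | ∃ p : Polynomial ℂ,
      p.natDegree ≤ k ∧ p.eval 0 = 1 ∧ x = ‖(Polynomial.aeval T p) r0‖} :=
  ⟨‖r0‖, 1, by simp, by simp, by simp⟩

lemma gmres_le (T : H →L[ℂ] H) (r0 : H) (k : ℕ) {p : ℂ[X]}
    (h1 : p.natDegree ≤ k) (h2 : p.eval 0 = 1) :
    gmresRes T r0 k ≤ ‖(Polynomial.aeval T p) r0‖ :=
  csInf_le (gmres_bddBelow T r0 k) ⟨p, h1, h2, rfl⟩

lemma aeval_apply_repr (T : H →L[ℂ] H) (r0 : H) (k : ℕ) {p : ℂ[X]}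
    (h1 : p.natDegree ≤ k) (h2 : p.eval 0 = 1) :
    (Polynomial.aeval T p) r0 = r0 + ∑ i : Fin k, p.coeff (i.1 + 1) • (T ^ (i.1 + 1)) r0 := by
  have h : p.natDegree < k + 1 := Nat.lt_succ_of_le h1
  rw [Polynomial.aeval_eq_sum_range' h]
  rw [ContinuousLinearMap.sum_apply]
  simp only [ContinuousLinearMap.smul_apply]
  rw [Finset.sum_range_succ']
  rw [← Polynomial.coeff_zero_eq_eval_zero] at h2
  rw [h2, pow_zero, ContinuousLinearMap.one_apply, one_smul, add_comm]
  congr 1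
  rw [← Finset.sum_range (fun i => p.coeff (i + 1) • (T ^ (i + 1)) r0)]

lemma exists_poly_of_coeffs (T : H →L[ℂ] H) (r0 : H) (k : ℕ) (c : Fin k → ℂ) :
    ∃ p : ℂ[X], p.natDegree ≤ k ∧ p.eval 0 = 1 ∧
      (Polynomial.aeval T p) r0 = r0 + ∑ i : Fin k, c i • (T ^ (i.1 + 1)) r0 := by
  refine ⟨1 + ∑ i : Fin k, C (c i) * X ^ (i.1 + 1), ?_, ?_, ?_⟩
  · refine (Polynomial.natDegree_add_le _ _).trans (max_le (by simp) ?_)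
    refine Polynomial.natDegree_sum_le_of_forall_le _ _ (fun i _ => ?_)
    exact (Polynomial.natDegree_C_mul_le _ _).trans ((Polynomial.natDegree_X_pow_le _).trans i.2)
  · simp [Polynomial.eval_finset_sum]
  · simp only [map_add, map_sum, map_one, map_mul, Polynomial.aeval_C, map_pow,
      Polynomial.aeval_X, ContinuousLinearMap.add_apply, ContinuousLinearMap.one_apply,
      ContinuousLinearMap.sum_apply, Algebra.algebraMap_eq_smul_one, smul_mul_assoc,
      one_mul, ContinuousLinearMap.smul_apply]

/-- The GMRES infimum is attained, because the set of candidate residuals is a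
finite-dimensional affine subspace. -/
lemma gmres_exists_min (T : H →L[ℂ] H) (r0 : H) (k : ℕ) :
    ∃ p : ℂ[X], p.natDegree ≤ k ∧ p.eval 0 = 1 ∧
      ‖(Polynomial.aeval T p) r0‖ = gmresRes T r0 k := by
  classical
  let L : (Fin k → ℂ) →ₗ[ℂ] H :=
    { toFun := fun c => ∑ i : Fin k, c i • (T ^ (i.1 + 1)) r0
      map_add' := by
        intro a b
        simp [add_smul, Finset.sum_add_distrib]
      map_smul' := by
        intro m a
        simp [smul_smul, Finset.smul_sum] }
  set K := LinearMap.range L with hK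
  haveI : FiniteDimensional ℂ K := inferInstance
  have hc : IsComplete (K : Set H) := K.complete_of_finiteDimensional
  obtain ⟨v, hvK, hv⟩ := Submodule.exists_norm_eq_iInf_of_complete_subspace (K := K) hc (-r0)
  obtain ⟨c₁, hc₁⟩ := hvK
  have hmin : ∀ w ∈ K, ‖-r0 - v‖ ≤ ‖-r0 - w‖ := by
    intro w hw
    rw [hv]
    have hb : BddBelow (Set.range fun w : (K : Set H) => ‖-r0 - (w : H)‖) :=
      ⟨0, by rintro x ⟨w, rfl⟩; exact norm_nonneg _⟩
    exact ciInf_le hb ⟨w, hw⟩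
  have hmin' : ∀ c : Fin k → ℂ, ‖r0 + L c₁‖ ≤ ‖r0 + L c‖ := by
    intro c
    have h1 : ‖r0 + L c₁‖ = ‖-r0 - v‖ := by
      rw [hc₁, ← norm_neg, neg_add, sub_eq_add_neg]
    have h2 : ‖r0 + L c‖ = ‖-r0 - L c‖ := by
      rw [← norm_neg, neg_add, sub_eq_add_neg]
    rw [h1, h2]
    exact hmin _ ⟨c, rfl⟩
  obtain ⟨p₀, hp₀1, hp₀2, hp₀3⟩ := exists_poly_of_coeffs T r0 k c₁
  refine ⟨p₀, hp₀1, hp₀2, le_antisymm ?_ (gmres_le T r0 k hp₀1 hp₀2)⟩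
  refine le_csInf (gmres_set_nonempty T r0 k) ?_
  rintro x ⟨p, h1, h2, rfl⟩
  rw [aeval_apply_repr T r0 k h1 h2, hp₀3]
  exact hmin' _

/-- One-step strict residual reduction when `0 ∉ W(T)`. -/
lemma one_step (T : H →L[ℂ] H) (hW : (0 : ℂ) ∉ numRange T) {r : H} (hr : r ≠ 0) :
    ∃ α : ℂ, ‖r - α • T r‖ < ‖r‖ := by
  have ha : (⟪r, T r⟫ : ℂ) ≠ 0 := by
    intro h0
    apply hW
    refine ⟨((‖r‖⁻¹ : ℝ) : ℂ) • r, ?_, ?_⟩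
    · rw [norm_smul, Complex.norm_real, Real.norm_eq_abs,
        abs_of_nonneg (by positivity), inv_mul_cancel₀ (norm_ne_zero_iff.mpr hr)]
    · rw [map_smul, inner_smul_left, inner_smul_right, h0]
      simp
  have hTr : T r ≠ 0 := by
    intro h
    rw [h, inner_zero_right] at ha
    exact ha rfl
  set a : ℂ := ⟪r, T r⟫ with haa
  set cc : ℝ := ‖T r‖ ^ 2 with hcc
  have hcpos : 0 < cc := by
    have : (0:ℝ) < ‖T r‖ := norm_pos_iff.mpr hTr
    positivity
  have hapos : 0 < ‖a‖ := norm_pos_iff.mpr ha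
  refine ⟨((cc⁻¹ : ℝ) : ℂ) * (starRingEnd ℂ) a, ?_⟩
  have hexp : ‖r - (((cc⁻¹ : ℝ) : ℂ) * (starRingEnd ℂ) a) • T r‖ ^ 2
      = ‖r‖ ^ 2 - 2 * Complex.re ((((cc⁻¹ : ℝ) : ℂ) * (starRingEnd ℂ) a) * a)
        + ‖(((cc⁻¹ : ℝ) : ℂ) * (starRingEnd ℂ) a) • T r‖ ^ 2 := by
    rw [@norm_sub_sq ℂ]
    rw [inner_smul_right]
    norm_num
    rw [← haa]
  have hre : Complex.re ((((cc⁻¹ : ℝ) : ℂ) * (starRingEnd ℂ) a) * a) = cc⁻¹ * ‖a‖ ^ 2 := by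
    rw [mul_assoc, RCLike.conj_mul]
    simp [← Complex.ofReal_pow, ← Complex.ofReal_mul]
  have hnsm : ‖(((cc⁻¹ : ℝ) : ℂ) * (starRingEnd ℂ) a) • T r‖ ^ 2 = cc⁻¹ ^ 2 * ‖a‖ ^ 2 * cc := by
    rw [norm_smul, norm_mul, RCLike.norm_conj, Complex.norm_real,
      Real.norm_eq_abs, abs_of_nonneg (by positivity)]
    rw [hcc]; ring
  have hlt : ‖r - (((cc⁻¹ : ℝ) : ℂ) * (starRingEnd ℂ) a) • T r‖ ^ 2 < ‖r‖ ^ 2 := by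
    rw [hexp, hre, hnsm]
    have h1 : cc⁻¹ ^ 2 * ‖a‖ ^ 2 * cc = cc⁻¹ * ‖a‖ ^ 2 := by
      field_simp
    rw [h1]
    have : 0 < cc⁻¹ * ‖a‖ ^ 2 := by positivity
    linarith
  exact lt_of_pow_lt_pow_left₀ 2 (norm_nonneg r) hlt

end Aux

/-- Proposition 3.1, equivalence (M1) ⇔ (M2): `B` exhibits strictly monotone
GMRES convergence iff `0 ∉ W(B)`. -/
theorem strictly_monotone_gmres_iff_zero_not_mem_numRange
    {H : Type*} [NormedAddCommGroup H] [InnerProductSpace ℂ H] [CompleteSpace H]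
    (B : H ≃L[ℂ] H) :
    (∀ (r0 : H) (k : ℕ),
        gmresRes (B : H →L[ℂ] H) r0 (k + 1) < gmresRes (B : H →L[ℂ] H) r0 k ∨
        gmresRes (B : H →L[ℂ] H) r0 k = 0) ↔
      (0 : ℂ) ∉ numRange (B : H →L[ℂ] H) := by
  set T : H →L[ℂ] H := (B : H →L[ℂ] H) with hT
  constructor
  · intro hM h0
    obtain ⟨z, hz, hz0⟩ := h0
    have hz0' : (inner ℂ z (T z) : ℂ) = 0 := hz0.symm
    have hBz0 : (inner ℂ (T z) z : ℂ) = 0 := by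
      rw [← inner_conj_symm, hz0', map_zero]
    -- gmresRes T z 0 = 1
    have h0eq : gmresRes T z 0 = 1 := by
      have hset : {x : ℝ | ∃ p : Polynomial ℂ,
          p.natDegree ≤ 0 ∧ p.eval 0 = 1 ∧ x = ‖(Polynomial.aeval T p) z‖} = {1} := by
        ext x
        simp only [Set.mem_setOf_eq, Set.mem_singleton_iff]
        constructor
        · rintro ⟨p, h1, h2, rfl⟩
          have hp : p = Polynomial.C (p.coeff 0) := Polynomial.eq_C_of_natDegree_le_zero h1
          rw [hp, Polynomial.eval_C] at h2
          rw [hp, h2, Polynomial.C_1, map_one, ContinuousLinearMap.one_apply, hz]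
        · rintro rfl
          exact ⟨1, by simp, by simp, by simp [hz]⟩
      rw [gmresRes, hset, csInf_singleton]
    -- gmresRes T z 1 ≥ 1
    have h1ge : (1:ℝ) ≤ gmresRes T z 1 := by
      refine le_csInf (gmres_set_nonempty T z 1) ?_
      rintro x ⟨p, h1, h2, rfl⟩
      have hp : p = Polynomial.C (p.coeff 1) * Polynomial.X + Polynomial.C (p.coeff 0) :=
        Polynomial.eq_X_add_C_of_natDegree_le_one h1
      have hc0 : p.coeff 0 = 1 := by
        rw [← Polynomial.coeff_zero_eq_eval_zero] at h2; exact h2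
      set a : ℂ := p.coeff 1
      have hval : (Polynomial.aeval T p) z = a • T z + z := by
        rw [hp, hc0]
        simp [Algebra.algebraMap_eq_smul_one, smul_mul_assoc]
      rw [hval]
      have hsq : ‖a • T z + z‖ ^ 2 = ‖a • T z‖ ^ 2 + 1 := by
        rw [@norm_add_sq ℂ, inner_smul_left, hBz0, mul_zero, map_zero, hz]
        ring
      nlinarith [norm_nonneg (a • T z + z), norm_nonneg (a • T z)]
    rcases hM z 0 with h | h
    · rw [h0eq] at h
      norm_num at h
      linarith
    · rw [h0eq] at h
      exact one_ne_zero h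
  · intro hW r0 k
    by_cases hm : gmresRes T r0 k = 0
    · exact Or.inr hm
    left
    obtain ⟨p, hp1, hp2, hp3⟩ := gmres_exists_min T r0 k
    set r : H := (Polynomial.aeval T p) r0 with hr
    have hrne : r ≠ 0 := by
      intro h
      apply hm
      rw [← hp3, h, norm_zero]
    obtain ⟨α, hα⟩ := one_step T hW hrne
    set q : Polynomial ℂ := (1 - Polynomial.C α * Polynomial.X) * p with hq
    have hq1 : q.natDegree ≤ k + 1 := by
      refine Polynomial.natDegree_mul_le.trans ?_
      have h1 : (1 - Polynomial.C α * Polynomial.X : Polynomial ℂ).natDegree ≤ 1 :=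
        (Polynomial.natDegree_sub_le _ _).trans
          (max_le (by simp) ((Polynomial.natDegree_C_mul_le _ _).trans Polynomial.natDegree_X_le))
      omega
    have hq2 : q.eval 0 = 1 := by
      simp [hq, hp2]
    have hq3 : (Polynomial.aeval T q) r0 = r - α • T r := by
      rw [hq, map_mul, ContinuousLinearMap.mul_apply, ← hr]
      simp [Algebra.algebraMap_eq_smul_one, smul_mul_assoc, sub_smul]
    calc gmresRes T r0 (k + 1) ≤ ‖(Polynomial.aeval T q) r0‖ := gmres_le T r0 (k+1) hq1 hq2
      _ < ‖r‖ := by rw [hq3]; exact hα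
      _ = gmresRes T r0 k := hp3
end

section
/- Let H = ℓ²(ℤ, ℂ) and let B be the diagonal operator defined by (Bx)_j = e^{i·arctan(j)}·x_j for j ∈ ℤ. Then B is a unitary operator on H, 0 ∉ W(B) (i.e., ⟨Bz, z⟩ ≠ 0 for every z ∈ H with z ≠ 0), and yet ν_B = 0 (i.e., inf { |⟨Bz, z⟩| : ‖z‖ = 1 } = 0). -/
noncomputable section

private lemma memlp_mul_aux (d : ℤ → ℂ) (hd : ∀ j, ‖d j‖ = 1) (x : lp (fun _ : ℤ => ℂ) 2) :
    Memℓp (fun j => d j * (x : ∀ _ : ℤ, ℂ) j) 2 := by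
  have hx := lp.memℓp x
  rw [memℓp_gen_iff (by norm_num)] at hx ⊢
  convert hx using 2 with j
  simp [norm_mul, hd]

private def diagL (d : ℤ → ℂ) (hd : ∀ j, ‖d j‖ = 1) :
    lp (fun _ : ℤ => ℂ) 2 →L[ℂ] lp (fun _ : ℤ => ℂ) 2 :=
  LinearMap.mkContinuous
    { toFun := fun x => ⟨fun j => d j * (x : ∀ _ : ℤ, ℂ) j, memlp_mul_aux d hd x⟩
      map_add' := by
        intro x y
        apply lp.ext
        funext j
        simp [lp.coeFn_add, mul_add]
        rfl
      map_smul' := by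
        intro c x
        apply lp.ext
        funext j
        simp [lp.coeFn_smul, Pi.smul_apply, smul_eq_mul]
        ring }
    1 (by
      intro x
      rw [one_mul]
      rw [lp.norm_eq_tsum_rpow (by norm_num), lp.norm_eq_tsum_rpow (p := 2) (by norm_num)]
      apply le_of_eq
      congr 1
      refine tsum_congr fun j => ?_
      show ‖d j * (x : ∀ _ : ℤ, ℂ) j‖ ^ ENNReal.toReal 2 = _
      rw [norm_mul, hd j, one_mul])

end

set_option maxHeartbeats 1000000 in
/-- Remark 3.1: the diagonal operator `B` on `ℓ²(ℤ, ℂ)` with diagonal entries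
`e^{i·arctan j}` is unitary, has `0 ∉ W(B)` (equivalently `⟨Bz, z⟩ ≠ 0` for all
`z ≠ 0`), and yet `ν_B = inf { |⟨Bz, z⟩| : ‖z‖ = 1 } = 0`. -/
theorem unitary_diagonal_arctan_monotone_not_linear
    (B : lp (fun _ : ℤ => ℂ) 2 →L[ℂ] lp (fun _ : ℤ => ℂ) 2)
    (hB : ∀ (x : lp (fun _ : ℤ => ℂ) 2) (j : ℤ),
      (B x : ∀ _ : ℤ, ℂ) j = Complex.exp (Complex.I * (Real.arctan j : ℂ)) * (x : ∀ _ : ℤ, ℂ) j) :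
    B ∈ unitary (lp (fun _ : ℤ => ℂ) 2 →L[ℂ] lp (fun _ : ℤ => ℂ) 2) ∧
    (∀ z : lp (fun _ : ℤ => ℂ) 2, z ≠ 0 → (inner ℂ z (B z) : ℂ) ≠ 0) ∧
    sInf {x : ℝ | ∃ z : lp (fun _ : ℤ => ℂ) 2, ‖z‖ = 1 ∧ x = ‖(inner ℂ z (B z) : ℂ)‖} = 0 := by
  classical
  set c : ℤ → ℂ := fun j => Complex.exp (Complex.I * (Real.arctan j : ℂ)) with hc
  have hcnorm : ∀ j, ‖c j‖ = 1 := by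
    intro j
    rw [hc]
    simp only [Complex.norm_exp]
    rw [show (Complex.I * ((Real.arctan j : ℝ) : ℂ)).re = 0 by
      simp [-Complex.ofReal_arctan, Complex.mul_re], Real.exp_zero]
  set d : ℤ → ℂ := fun j => Complex.exp (-(Complex.I * (Real.arctan j : ℂ))) with hdd
  have hdnorm : ∀ j, ‖d j‖ = 1 := by
    intro j
    rw [hdd]
    simp only [Complex.norm_exp]
    rw [show (-(Complex.I * ((Real.arctan j : ℝ) : ℂ))).re = 0 by
      simp [-Complex.ofReal_arctan, Complex.mul_re], Real.exp_zero]
  have hdc : ∀ j, d j * c j = 1 := by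
    intro j; rw [hdd, hc, ← Complex.exp_add]; rw [neg_add_cancel, Complex.exp_zero]
  have hconjd : ∀ j, (starRingEnd ℂ) (d j) = c j := by
    intro j
    rw [hdd, hc, ← Complex.exp_conj]
    congr 1
    rw [map_neg, map_mul, Complex.conj_I, Complex.conj_ofReal]
    ring
  set C : lp (fun _ : ℤ => ℂ) 2 →L[ℂ] lp (fun _ : ℤ => ℂ) 2 := diagL d hdnorm with hCdef
  have hCapp : ∀ (x : lp (fun _ : ℤ => ℂ) 2) (j : ℤ),
      (C x : ∀ _ : ℤ, ℂ) j = d j * (x : ∀ _ : ℤ, ℂ) j := fun x j => rfl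
  have hCB : C * B = 1 := by
    ext x j
    show (C (B x) : ∀ _ : ℤ, ℂ) j = (x : ∀ _ : ℤ, ℂ) j
    rw [hCapp, hB, ← mul_assoc, hdc, one_mul]
  have hBC : B * C = 1 := by
    ext x j
    show (B (C x) : ∀ _ : ℤ, ℂ) j = (x : ∀ _ : ℤ, ℂ) j
    rw [hB, hCapp, ← mul_assoc, mul_comm (c j) (d j), hdc, one_mul]
  have hadj : C = ContinuousLinearMap.adjoint B := by
    rw [ContinuousLinearMap.eq_adjoint_iff]
    intro x y
    rw [lp.inner_eq_tsum, lp.inner_eq_tsum]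
    refine tsum_congr fun j => ?_
    rw [RCLike.inner_apply, RCLike.inner_apply, hCapp, hB, map_mul, hconjd]
    ring
  have hstar : star B = C := by
    rw [ContinuousLinearMap.star_eq_adjoint, ← hadj]
  refine ⟨?_, ?_, ?_⟩
  · rw [Unitary.mem_iff, hstar]
    exact ⟨hCB, hBC⟩
  · -- Part 2: 0 is not in the numerical range
    intro z hz
    obtain ⟨j0, hj0⟩ : ∃ j, (z : ∀ _ : ℤ, ℂ) j ≠ 0 := by
      by_contra h
      push_neg at h
      exact hz (lp.ext (funext h))
    have hsum : Summable fun j =>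
        (starRingEnd ℂ) ((z : ∀ _ : ℤ, ℂ) j) * ((B z : ∀ _ : ℤ, ℂ) j) := by
      have := lp.summable_inner (𝕜 := ℂ) z (B z)
      simpa [RCLike.inner_apply, mul_comm] using this
    have hterm : ∀ j, ((starRingEnd ℂ) ((z : ∀ _ : ℤ, ℂ) j) * ((B z : ∀ _ : ℤ, ℂ) j)).re
        = Real.cos (Real.arctan j) * Complex.normSq ((z : ∀ _ : ℤ, ℂ) j) := by
      intro j
      rw [hB]
      set w := (z : ∀ _ : ℤ, ℂ) j with hw
      rw [show (starRingEnd ℂ) w * (c j * w) = c j * ((Complex.normSq w : ℝ) : ℂ) by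
        rw [show (starRingEnd ℂ) w * (c j * w) = c j * (w * (starRingEnd ℂ) w) by ring,
          Complex.mul_conj]]
      have hcre : (c j).re = Real.cos (Real.arctan j) := by
        simp only [hc]
        rw [mul_comm Complex.I, Complex.exp_mul_I]
        simp [-Complex.ofReal_arctan, Complex.cos_ofReal_re]
      rw [Complex.mul_re]
      simp [-Complex.ofReal_arctan, hcre]
    have hcospos : ∀ j : ℤ, 0 < Real.cos (Real.arctan j) := fun j => Real.cos_arctan_pos _
    have hre : (inner ℂ z (B z) : ℂ).re =
        ∑' j : ℤ, Real.cos (Real.arctan j) * Complex.normSq ((z : ∀ _ : ℤ, ℂ) j) := by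
      rw [lp.inner_eq_tsum]
      simp only [RCLike.inner_apply']
      rw [Complex.re_tsum hsum]
      exact tsum_congr fun j => hterm j
    have hsumre : Summable fun j : ℤ =>
        Real.cos (Real.arctan j) * Complex.normSq ((z : ∀ _ : ℤ, ℂ) j) := by
      have h2 := hsum.map Complex.reAddGroupHom Complex.continuous_re
      refine h2.congr fun j => ?_
      exact hterm j
    have hpos : 0 < ∑' j : ℤ, Real.cos (Real.arctan j) * Complex.normSq ((z : ∀ _ : ℤ, ℂ) j) := by
      refine Summable.tsum_pos hsumre (fun j => ?_) j0 ?_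
      · exact mul_nonneg (hcospos j).le (Complex.normSq_nonneg _)
      · exact mul_pos (hcospos j0) (Complex.normSq_pos.2 hj0)
    intro h0
    rw [h0] at hre
    simp only [Complex.zero_re] at hre
    rw [← hre] at hpos
    exact lt_irrefl _ hpos
  · -- Part 3: the infimum is 0
    set S := {x : ℝ | ∃ z : lp (fun _ : ℤ => ℂ) 2, ‖z‖ = 1 ∧ x = ‖(inner ℂ z (B z) : ℂ)‖} with hS
    have hlb : ∀ x ∈ S, (0:ℝ) ≤ x := by
      rintro x ⟨z, -, rfl⟩; exact norm_nonneg _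
    have hbdd : BddBelow S := ⟨0, hlb⟩
    have hne : S.Nonempty := by
      set z0 : lp (fun _ : ℤ => ℂ) 2 := lp.single 2 (0:ℤ) (1:ℂ) with hz0
      have hn0 : ‖z0‖ = 1 := by
        rw [hz0]
        have := lp.norm_single (p := 2) (E := fun _ : ℤ => ℂ) (by norm_num) (0:ℤ) (1:ℂ)
        simpa using this
      exact ⟨‖(inner ℂ z0 (B z0) : ℂ)‖, z0, hn0, rfl⟩
    have key : ∀ n : ℕ, sInf S ≤ 1 / ((n:ℝ) + 1) := by
      intro n
      set N : ℤ := (n : ℤ) + 1 with hN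
      have hNne : N ≠ -N := by omega
      have hNne' : -N ≠ N := by omega
      set a : ℂ := (((Real.sqrt 2)⁻¹ : ℝ) : ℂ) with ha
      set z : lp (fun _ : ℤ => ℂ) 2 := lp.single 2 N a + lp.single 2 (-N) a with hz
      have hzN : (z : ∀ _ : ℤ, ℂ) N = a := by
        rw [hz, lp.coeFn_add, Pi.add_apply,
          lp.single_apply_self (E := fun _ : ℤ => ℂ) 2 N a,
          lp.single_apply_ne (E := fun _ : ℤ => ℂ) 2 (-N) a hNne, add_zero]
      have hzN' : (z : ∀ _ : ℤ, ℂ) (-N) = a := by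
        rw [hz, lp.coeFn_add, Pi.add_apply,
          lp.single_apply_self (E := fun _ : ℤ => ℂ) 2 (-N) a,
          lp.single_apply_ne (E := fun _ : ℤ => ℂ) 2 N a hNne', zero_add]
      have ha2 : (Real.sqrt 2)⁻¹ * (Real.sqrt 2)⁻¹ = 2⁻¹ := by
        rw [← mul_inv, Real.mul_self_sqrt (by norm_num)]
      -- the norm of z is 1
      have hzz : (inner ℂ z z : ℂ) = 1 := by
        have h1 : (inner ℂ z z : ℂ) =
            (starRingEnd ℂ) a * ((z : ∀ _ : ℤ, ℂ) N) +
            (starRingEnd ℂ) a * ((z : ∀ _ : ℤ, ℂ) (-N)) := by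
          nth_rewrite 1 [hz]
          rw [inner_add_left, lp.inner_single_left, lp.inner_single_left,
            RCLike.inner_apply', RCLike.inner_apply']
        rw [h1, hzN, hzN', ha, Complex.conj_ofReal, ← Complex.ofReal_mul, ha2]
        norm_num
      have hznorm : ‖z‖ = 1 := by
        rw [@norm_eq_sqrt_re_inner ℂ, hzz]
        simp
      -- the inner product
      set θ : ℝ := Real.arctan (N : ℝ) with hθ
      have hcN : c N = Complex.exp (Complex.I * (θ : ℂ)) := by simp only [hc, hθ]
      have harg : ((-N : ℤ) : ℝ) = -((N : ℤ) : ℝ) := by push_cast; ring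
      have hcN' : c (-N) = Complex.exp (-(Complex.I * (θ : ℂ))) := by
        simp only [hc, hθ]
        rw [harg, Real.arctan_neg, Complex.ofReal_neg]
        congr 1
        ring
      have hsumc : c N + c (-N) = 2 * (Real.cos θ : ℂ) := by
        rw [hcN, hcN', mul_comm Complex.I, show -((θ:ℂ) * Complex.I) = (-(θ:ℂ)) * Complex.I by ring,
          Complex.exp_mul_I, Complex.exp_mul_I, Complex.cos_neg, Complex.sin_neg,
          ← Complex.ofReal_cos]
        ring
      have hinner : (inner ℂ z (B z) : ℂ) = (Real.cos θ : ℂ) := by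
        have h1 : (inner ℂ z (B z) : ℂ) =
            (starRingEnd ℂ) a * ((B z : ∀ _ : ℤ, ℂ) N) +
            (starRingEnd ℂ) a * ((B z : ∀ _ : ℤ, ℂ) (-N)) := by
          nth_rewrite 1 [hz]
          rw [inner_add_left, lp.inner_single_left, lp.inner_single_left,
            RCLike.inner_apply', RCLike.inner_apply']
        rw [h1, hB, hB, hzN, hzN', ha, Complex.conj_ofReal]
        rw [show Complex.exp (Complex.I * ((Real.arctan (N:ℤ) : ℝ) : ℂ)) = c N from rfl,
          show Complex.exp (Complex.I * ((Real.arctan ((-N:ℤ)) : ℝ) : ℂ)) = c (-N) from rfl]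
        rw [show (((Real.sqrt 2)⁻¹ : ℝ) : ℂ) * (c N * (((Real.sqrt 2)⁻¹ : ℝ) : ℂ)) +
            (((Real.sqrt 2)⁻¹ : ℝ) : ℂ) * (c (-N) * (((Real.sqrt 2)⁻¹ : ℝ) : ℂ)) =
            ((((Real.sqrt 2)⁻¹ * (Real.sqrt 2)⁻¹ : ℝ)) : ℂ) * (c N + c (-N)) by push_cast; ring]
        rw [ha2, hsumc]
        push_cast
        ring
      -- conclude
      have hcos : Real.cos θ = 1 / Real.sqrt (1 + (N:ℝ) ^ 2) := Real.cos_arctan _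
      have hmem : (1 / Real.sqrt (1 + (N:ℝ) ^ 2)) ∈ S := by
        refine ⟨z, hznorm, ?_⟩
        rw [hinner, Complex.norm_real, hcos, Real.norm_eq_abs, abs_of_pos]
        positivity
      have hle : sInf S ≤ 1 / Real.sqrt (1 + (N:ℝ) ^ 2) := csInf_le hbdd hmem
      refine hle.trans ?_
      have hNpos : (0:ℝ) < (n:ℝ) + 1 := by positivity
      have hNval : ((N:ℤ) : ℝ) = (n:ℝ) + 1 := by rw [hN]; push_cast; ring
      have hsqrt : (n:ℝ) + 1 ≤ Real.sqrt (1 + (N:ℝ) ^ 2) := by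
        rw [show ((n:ℝ) + 1) = Real.sqrt (((n:ℝ)+1)^2) by
          rw [Real.sqrt_sq hNpos.le]]
        apply Real.sqrt_le_sqrt
        rw [hNval]
        nlinarith
      apply one_div_le_one_div_of_le hNpos hsqrt
    have hle0 : sInf S ≤ 0 :=
      ge_of_tendsto' tendsto_one_div_add_atTop_nhds_zero_nat key
    have hge0 : 0 ≤ sInf S := le_csInf hne hlb
    linarith
end

section
/- Let H be a complex separable Hilbert space, A an invertible bounded linear operator on H, r0 ∈ H, and k ≥ 1. Suppose (t_1, …, t_{k+1}) is an orthonormal family in H such that span{t_1, …, t_j} = K_j(A, r0) for each j = 1, …, k+1, and (z_1, …, z_k) is an orthonormal family such that span{z_1, …, z_j} = A·K_j(A, r0) for each j = 1, …, k. Then ‖r_k^{A,r0}‖ = |⟨z_k, t_{k+1}⟩|·‖r_{k-1}^{A,r0}‖, and moreover for every λ ∈ ℂ, ‖r_k^{A,r0}‖ = |⟨(I − λA⁻¹)z_k, t_{k+1}⟩|·‖r_{k-1}^{A,r0}‖ (Moret's formula). -/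
open Polynomial Submodule FiniteDimensional

local notation "⟪" x ", " y "⟫" => @inner ℂ _ _ x y

section helpers

variable {H : Type*} [NormedAddCommGroup H] [InnerProductSpace ℂ H]

lemma myInner_span_zero {s : Set H} {x : H} (h : ∀ u ∈ s, ⟪u, x⟫ = 0)
    {v : H} (hv : v ∈ span ℂ s) : ⟪v, x⟫ = 0 := by
  induction hv using Submodule.span_induction with
  | mem u hu => exact h u hu
  | zero => simp
  | add a b _ _ ha hb => rw [inner_add_left, ha, hb, add_zero]
  | smul c a _ ha => rw [inner_smul_left, ha, mul_zero]

lemma myCsInf (V : Submodule ℂ H) (r0 P : H) (hP : P ∈ V)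
    (horth : ∀ v ∈ V, ⟪v, r0 - P⟫ = 0) :
    sInf ((fun y => ‖r0 - y‖) '' (V : Set H)) = ‖r0 - P‖ := by
  apply IsLeast.csInf_eq
  constructor
  · exact ⟨P, hP, rfl⟩
  · rintro x ⟨y, hy, rfl⟩
    have h0 : ⟪P - y, r0 - P⟫ = 0 := horth _ (sub_mem hP hy)
    have h0' : ⟪r0 - P, P - y⟫ = 0 := by
      rw [← inner_conj_symm, h0, map_zero]
    have hsplit : r0 - y = (r0 - P) + (P - y) := by abel
    have := norm_add_sq (𝕜 := ℂ) (r0 - P) (P - y)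
    rw [h0'] at this
    simp only [map_zero, mul_zero, add_zero] at this
    have h2 : ‖r0 - P‖ ^ 2 ≤ ‖r0 - y‖ ^ 2 := by
      rw [hsplit, this]; nlinarith [sq_nonneg ‖P - y‖, sq_nonneg (‖r0 - P‖)]
    nlinarith [norm_nonneg (r0 - P), norm_nonneg (r0 - y)]

noncomputable def KS (T : H →L[ℂ] H) (r0 : H) (j : ℕ) : Submodule ℂ H :=
  span ℂ ((fun i : ℕ => (T ^ i) r0) '' {i | i < j})

lemma aeval_mem_KS (T : H →L[ℂ] H) (r0 : H) {j : ℕ} {q : ℂ[X]}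
    (hq : q.degree < (j : WithBot ℕ)) : (aeval T q) r0 ∈ KS T r0 j := by
  rcases eq_or_ne q 0 with rfl | hq0
  · simp [Submodule.zero_mem]
  · have hnd : q.natDegree < j := (natDegree_lt_iff_degree_lt hq0).2 hq
    rw [aeval_eq_sum_range]
    rw [ContinuousLinearMap.sum_apply]
    apply Submodule.sum_mem
    intro i hi
    rw [ContinuousLinearMap.smul_apply]
    apply Submodule.smul_mem
    apply Submodule.subset_span
    refine ⟨i, ?_, rfl⟩
    simp only [Set.mem_setOf_eq]
    simp only [Finset.mem_range] at hi
    omega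

lemma exists_poly_of_mem_KS (T : H →L[ℂ] H) (r0 : H) {j : ℕ} {y : H}
    (hy : y ∈ KS T r0 j) :
    ∃ q : ℂ[X], q.degree < (j : WithBot ℕ) ∧ (aeval T q) r0 = y := by
  induction hy using Submodule.span_induction with
  | mem u hu =>
    obtain ⟨i, hi, rfl⟩ := hu
    exact ⟨X ^ i, by simpa [degree_X_pow] using (by exact_mod_cast hi : (i : WithBot ℕ) < j),
      by simp [map_pow]⟩
  | zero => exact ⟨0, by exact_mod_cast WithBot.bot_lt_coe j, by simp⟩
  | add a b _ _ ha hb =>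
    obtain ⟨q1, hq1, rfl⟩ := ha
    obtain ⟨q2, hq2, rfl⟩ := hb
    exact ⟨q1 + q2, lt_of_le_of_lt (degree_add_le _ _) (max_lt hq1 hq2), by simp⟩
  | smul c a _ ha =>
    obtain ⟨q, hq, rfl⟩ := ha
    exact ⟨c • q, lt_of_le_of_lt (degree_smul_le _ _) hq, by simp⟩

lemma gmres_set (T : H →L[ℂ] H) (r0 : H) (j : ℕ) :
    {x : ℝ | ∃ p : ℂ[X], p.natDegree ≤ j ∧ p.eval 0 = 1 ∧ x = ‖(aeval T p) r0‖}
      = (fun y => ‖r0 - y‖) ''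
          ((Submodule.map (T : H →ₗ[ℂ] H) (KS T r0 j) : Submodule ℂ H) : Set H) := by
  ext x
  constructor
  · rintro ⟨p, hdeg, h0, rfl⟩
    have hp0 : p ≠ 0 := fun h => by simp [h] at h0
    have hdlt : (p.divX).degree < (j : WithBot ℕ) := by
      refine lt_of_lt_of_le (degree_divX_lt hp0) ?_
      exact (degree_le_natDegree).trans (by exact_mod_cast hdeg)
    set w := (aeval T p.divX) r0 with hw
    have hwm : w ∈ KS T r0 j := aeval_mem_KS T r0 hdlt
    refine ⟨-(T w), ⟨-w, neg_mem hwm, by simp⟩, ?_⟩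
    have hps : (aeval T p) r0 = r0 + T w := by
      conv_lhs => rw [← p.divX_mul_X_add]
      rw [coeff_zero_eq_eval_zero, h0, map_one, mul_comm]
      simp [ContinuousLinearMap.add_apply, ContinuousLinearMap.mul_apply, add_comm]
      rfl
    show ‖r0 - -T w‖ = _
    rw [hps, sub_neg_eq_add]
  · rintro ⟨y, hy, rfl⟩
    rw [SetLike.mem_coe, Submodule.mem_map] at hy
    obtain ⟨w, hw, rfl⟩ := hy
    obtain ⟨q, hqd, rfl⟩ := exists_poly_of_mem_KS T r0 hw
    refine ⟨C 1 - X * q, ?_, by simp, ?_⟩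
    · rcases eq_or_ne q 0 with rfl | hq0
      · simp
      · refine le_trans (natDegree_sub_le _ _) (max_le (by simp) ?_)
        refine le_trans (natDegree_mul_le) ?_
        have : q.natDegree < j := (natDegree_lt_iff_degree_lt hq0).2 hqd
        simp only [natDegree_X]
        omega
    · simp [map_sub, map_mul, ContinuousLinearMap.sub_apply,
        ContinuousLinearMap.mul_apply, ContinuousLinearMap.one_apply]

lemma gmresRes_eq (T : H →L[ℂ] H) (r0 : H) (j : ℕ) (P : H)
    (hP : P ∈ Submodule.map (T : H →ₗ[ℂ] H) (KS T r0 j))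
    (horth : ∀ v ∈ Submodule.map (T : H →ₗ[ℂ] H) (KS T r0 j), ⟪v, r0 - P⟫ = 0) :
    gmresRes T r0 j = ‖r0 - P‖ := by
  unfold gmresRes
  rw [gmres_set]
  exact myCsInf _ _ _ hP horth

lemma KS_mono (T : H →L[ℂ] H) (r0 : H) {j j' : ℕ} (h : j ≤ j') :
    KS T r0 j ≤ KS T r0 j' :=
  span_mono (Set.image_mono fun i hi => lt_of_lt_of_le hi h)

lemma map_KS_le (T : H →L[ℂ] H) (r0 : H) (j : ℕ) :
    Submodule.map (T : H →ₗ[ℂ] H) (KS T r0 j) ≤ KS T r0 (j + 1) := by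
  rw [KS, Submodule.map_span]
  rw [Submodule.span_le]
  rintro _ ⟨_, ⟨i, hi, rfl⟩, rfl⟩
  apply Submodule.subset_span
  refine ⟨i + 1, ?_, ?_⟩
  · simp only [Set.mem_setOf_eq] at hi ⊢; omega
  · simp [pow_succ', ContinuousLinearMap.mul_apply]

end helpers

/-- Lemma 4.1 (Moret's formula): `‖r_k‖ = |⟨z_k, t_{k+1}⟩| ‖r_{k-1}‖`, and for
every `λ ∈ ℂ` also `‖r_k‖ = |⟨(I - λA⁻¹) z_k, t_{k+1}⟩| ‖r_{k-1}‖`, where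
`t_1, …, t_{k+1}` (here `t 0, …, t k`) is an orthonormal basis of the ascending
Krylov spaces `K_j(A, r0)` and `z_1, …, z_k` (here `z 0, …, z (k-1)`) is an
orthonormal basis of the spaces `A·K_j(A, r0)`. -/
theorem moret_formula
    {H : Type*} [NormedAddCommGroup H] [InnerProductSpace ℂ H]
    [CompleteSpace H] [TopologicalSpace.SeparableSpace H]
    (A : H ≃L[ℂ] H) (r0 : H) (k : ℕ) (hk : 1 ≤ k)
    (t : Fin (k + 1) → H) (ht : Orthonormal ℂ t)
    (htspan : ∀ j : Fin (k + 1),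
      Submodule.span ℂ (t '' {i | i ≤ j}) =
        Submodule.span ℂ ((fun i : ℕ => ((A : H →L[ℂ] H) ^ i) r0) '' {i | i ≤ (j : ℕ)}))
    (z : Fin k → H) (hz : Orthonormal ℂ z)
    (hzspan : ∀ j : Fin k,
      Submodule.span ℂ (z '' {i | i ≤ j}) =
        Submodule.map ((A : H →L[ℂ] H) : H →ₗ[ℂ] H)
          (Submodule.span ℂ ((fun i : ℕ => ((A : H →L[ℂ] H) ^ i) r0) '' {i | i ≤ (j : ℕ)}))) :
    gmresRes (A : H →L[ℂ] H) r0 k =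
      ‖(inner ℂ (z ⟨k - 1, by omega⟩) (t (Fin.last k)) : ℂ)‖ * gmresRes (A : H →L[ℂ] H) r0 (k - 1) ∧
    ∀ lam : ℂ,
      gmresRes (A : H →L[ℂ] H) r0 k =
        ‖(inner ℂ (z ⟨k - 1, by omega⟩ - lam • (A.symm : H →L[ℂ] H) (z ⟨k - 1, by omega⟩))
            (t (Fin.last k)) : ℂ)‖ * gmresRes (A : H →L[ℂ] H) r0 (k - 1) := by
  classical
  set T : H →L[ℂ] H := (A : H →L[ℂ] H) with hT
  set K1 : Fin k := ⟨k - 1, by omega⟩ with hK1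
  set zK : H := z K1 with hzK
  set tl : H := t (Fin.last k) with htl
  -- span identities
  have h1 : span ℂ (Set.range z) = Submodule.map (T : H →ₗ[ℂ] H) (KS T r0 k) := by
    have h := hzspan K1
    rw [show {i : Fin k | i ≤ K1} = Set.univ by
        ext i; simp only [Set.mem_setOf_eq, Set.mem_univ, iff_true, Fin.le_def, hK1]
        have := i.isLt; omega,
      Set.image_univ] at h
    rw [show {i : ℕ | i ≤ ((K1 : Fin k) : ℕ)} = {i : ℕ | i < k} by
        ext i; simp only [Set.mem_setOf_eq, hK1]; omega] at h
    exact h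
  have h2 : span ℂ (z '' {i : Fin k | (i : ℕ) < k - 1})
      = Submodule.map (T : H →ₗ[ℂ] H) (KS T r0 (k - 1)) := by
    rcases Nat.lt_or_ge k 2 with hk2 | hk2
    · have hkk : k = 1 := by omega
      subst hkk
      have he1 : {i : Fin 1 | (i : ℕ) < 0} = (∅ : Set (Fin 1)) := by
        ext i; simp
      have he2 : {i : ℕ | i < 0} = (∅ : Set ℕ) := by ext i; simp
      rw [he1, Set.image_empty, span_empty, KS, he2, Set.image_empty, span_empty,
        Submodule.map_bot]
    · have h := hzspan ⟨k - 2, by omega⟩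
      rw [show {i : Fin k | i ≤ (⟨k - 2, by omega⟩ : Fin k)} = {i : Fin k | (i : ℕ) < k - 1} by
          ext i; simp only [Set.mem_setOf_eq, Fin.le_def]; omega] at h
      rw [show {i : ℕ | i ≤ ((⟨k - 2, by omega⟩ : Fin k) : ℕ)} = {i : ℕ | i < k - 1} by
          ext i; simp only [Set.mem_setOf_eq]; omega] at h
      exact h
  have h3 : span ℂ (Set.range t) = KS T r0 (k + 1) := by
    have h := htspan (Fin.last k)
    rw [show {i : Fin (k + 1) | i ≤ Fin.last k} = Set.univ by
        ext i; simpa using Fin.le_last i, Set.image_univ] at h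
    rw [show {i : ℕ | i ≤ ((Fin.last k : Fin (k + 1)) : ℕ)} = {i : ℕ | i < k + 1} by
        ext i; simp only [Set.mem_setOf_eq, Fin.val_last]; omega] at h
    exact h
  have h4 : span ℂ (t '' {i : Fin (k + 1) | (i : ℕ) < k}) = KS T r0 k := by
    have h := htspan ⟨k - 1, by omega⟩
    rw [show {i : Fin (k + 1) | i ≤ (⟨k - 1, by omega⟩ : Fin (k + 1))}
          = {i : Fin (k + 1) | (i : ℕ) < k} by
        ext i; simp only [Set.mem_setOf_eq, Fin.le_def]; omega] at h
    rw [show {i : ℕ | i ≤ ((⟨k - 1, by omega⟩ : Fin (k + 1)) : ℕ)} = {i : ℕ | i < k} by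
        ext i; simp only [Set.mem_setOf_eq]; omega] at h
    exact h
  -- inner products of the orthonormal families
  have hzij : ∀ a b : Fin k, ⟪z a, z b⟫ = if a = b then (1 : ℂ) else 0 :=
    orthonormal_iff_ite.mp hz
  -- the projections
  set P1 : H := ∑ i ∈ Finset.univ.filter (fun i : Fin k => (i : ℕ) < k - 1),
      ⟪z i, r0⟫ • z i with hP1
  set PK : H := ∑ i : Fin k, ⟪z i, r0⟫ • z i with hPK
  set u : H := r0 - P1 with hu
  set ρ : H := r0 - PK with hρ
  have hPsplit : PK = P1 + ⟪zK, r0⟫ • zK := by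
    have hs := Finset.sum_filter_add_sum_filter_not Finset.univ
      (fun i : Fin k => (i : ℕ) < k - 1) (fun i => ⟪z i, r0⟫ • z i)
    have hfe : Finset.univ.filter (fun i : Fin k => ¬ ((i : ℕ) < k - 1)) = {K1} := by
      ext i
      simp only [Finset.mem_filter, Finset.mem_univ, true_and, Finset.mem_singleton, hK1,
        Fin.ext_iff]
      have := i.isLt; omega
    rw [hfe, Finset.sum_singleton] at hs
    rw [hPK, ← hs, hP1]
  have hinner_u : ∀ jj : Fin k, ⟪z jj, u⟫
      = if (jj : ℕ) < k - 1 then 0 else ⟪z jj, r0⟫ := by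
    intro jj
    rw [hu, inner_sub_right, hP1, inner_sum]
    simp only [inner_smul_right, hzij, mul_ite, mul_one, mul_zero]
    rw [Finset.sum_ite_eq]
    simp only [Finset.mem_filter, Finset.mem_univ, true_and]
    split_ifs <;> ring
  have hinner_ρ : ∀ jj : Fin k, ⟪z jj, ρ⟫ = 0 := by
    intro jj
    rw [hρ, inner_sub_right, hPK, inner_sum]
    simp only [inner_smul_right, hzij, mul_ite, mul_one, mul_zero]
    rw [Finset.sum_ite_eq]
    simp
  -- membership facts
  have hPKmem : PK ∈ Submodule.map (T : H →ₗ[ℂ] H) (KS T r0 k) := by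
    rw [← h1]
    exact Submodule.sum_mem _ fun i _ =>
      Submodule.smul_mem _ _ (subset_span ⟨i, rfl⟩)
  have hP1mem : P1 ∈ Submodule.map (T : H →ₗ[ℂ] H) (KS T r0 (k - 1)) := by
    rw [← h2]
    refine Submodule.sum_mem _ fun i hi => Submodule.smul_mem _ _ (subset_span ⟨i, ?_, rfl⟩)
    simpa using (Finset.mem_filter.mp hi).2
  -- gmres values
  have EK : gmresRes T r0 k = ‖ρ‖ := by
    refine gmresRes_eq T r0 k PK hPKmem ?_
    intro v hv
    rw [← h1] at hv
    exact myInner_span_zero (by rintro _ ⟨i, rfl⟩; exact hinner_ρ i) hv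
  have EP : gmresRes T r0 (k - 1) = ‖u‖ := by
    refine gmresRes_eq T r0 (k - 1) P1 hP1mem ?_
    intro v hv
    rw [← h2] at hv
    refine myInner_span_zero ?_ hv
    rintro _ ⟨i, hi, rfl⟩
    rw [hinner_u i, if_pos (by simpa using hi)]
  -- t_{k+1} is orthogonal to K_k
  have htlo : ∀ v ∈ KS T r0 k, ⟪v, tl⟫ = 0 := by
    intro v hv
    rw [← h4] at hv
    refine myInner_span_zero ?_ hv
    rintro _ ⟨i, hi, rfl⟩
    refine ht.2 ?_
    intro hie
    rw [hie] at hi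
    simp only [Set.mem_setOf_eq, Fin.val_last] at hi
    omega
  -- basic memberships
  have hVprevle : Submodule.map (T : H →ₗ[ℂ] H) (KS T r0 (k - 1)) ≤ KS T r0 k := by
    have h := map_KS_le T r0 (k - 1)
    rwa [show k - 1 + 1 = k by omega] at h
  have hr0mem : r0 ∈ KS T r0 k := subset_span ⟨0, by simp only [Set.mem_setOf_eq]; omega, by simp⟩
  have humem : u ∈ KS T r0 k := sub_mem hr0mem (hVprevle hP1mem)
  have hzKmem : zK ∈ Submodule.map (T : H →ₗ[ℂ] H) (KS T r0 k) := by
    rw [← h1]; exact subset_span ⟨K1, rfl⟩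
  have hzKKS : zK ∈ KS T r0 (k + 1) := map_KS_le T r0 k hzKmem
  -- A⁻¹ z_K ⊥ t_{k+1}
  have hAsymm : ⟪(A.symm : H →L[ℂ] H) zK, tl⟫ = 0 := by
    obtain ⟨y, hy, hAy⟩ := hzKmem
    have hyz : (A.symm : H →L[ℂ] H) zK = y := by
      rw [← hAy]
      exact A.symm_apply_apply y
    rw [hyz]
    exact htlo y hy
  have hcK : ⟪zK, u⟫ = ⟪zK, r0⟫ := by
    have h := hinner_u K1
    rwa [if_neg (by simp only [hK1]; omega)] at h
  have hρu : ρ = u - ⟪zK, r0⟫ • zK := by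
    rw [hρ, hu, hPsplit]; abel
  have hnormρ2 : ‖u‖ ^ 2 = ‖ρ‖ ^ 2 + ‖⟪zK, r0⟫‖ ^ 2 := by
    have hud : u = ρ + ⟪zK, r0⟫ • zK := by rw [hρu]; abel
    have hz0 : ⟪ρ, zK⟫ = 0 := by
      rw [← inner_conj_symm, hinner_ρ K1, map_zero]
    have hor : ⟪ρ, ⟪zK, r0⟫ • zK⟫ = 0 := by
      rw [inner_smul_right, hz0, mul_zero]
    have := norm_add_sq (𝕜 := ℂ) ρ (⟪zK, r0⟫ • zK)
    rw [hor] at this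
    simp only [map_zero, mul_zero, add_zero] at this
    rw [hud, this, norm_smul, hz.1 K1]
    simp [mul_pow]
  by_cases hu0 : u = 0
  · have hc0 : ⟪zK, r0⟫ = 0 := by rw [← hcK, hu0, inner_zero_right]
    have hρ0 : ρ = 0 := by rw [hρu, hc0, zero_smul, sub_zero, hu0]
    constructor
    · rw [EK, EP, hρ0, hu0]; simp
    · intro lam
      rw [EK, EP, hρ0, hu0]; simp
  · -- main case : u ≠ 0
    have hsplitK : KS T r0 (k + 1) = KS T r0 k ⊔ (ℂ ∙ tl) := by
      have hrange : Set.range t = (t '' {i : Fin (k + 1) | (i : ℕ) < k}) ∪ {tl} := by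
        ext x
        constructor
        · rintro ⟨i, rfl⟩
          by_cases hik : (i : ℕ) < k
          · exact Or.inl ⟨i, hik, rfl⟩
          · have hieq : i = Fin.last k := by
              apply Fin.ext; simp only [Fin.val_last]; have := i.isLt; omega
            exact Or.inr (by rw [hieq]; rfl)
        · rintro (⟨i, _, rfl⟩ | hx)
          · exact ⟨i, rfl⟩
          · rw [Set.mem_singleton_iff] at hx
            exact ⟨Fin.last k, hx.symm⟩
      rw [← h3, hrange, Submodule.span_union, h4]
    have hzKsup : zK ∈ KS T r0 k ⊔ (ℂ ∙ tl) := hsplitK ▸ hzKKS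
    rw [Submodule.mem_sup] at hzKsup
    obtain ⟨x0, hx0, w, hw, hsum⟩ := hzKsup
    rw [Submodule.mem_span_singleton] at hw
    obtain ⟨a, rfl⟩ := hw
    have htln : ‖tl‖ = 1 := ht.1 (Fin.last k)
    have htl1 : ⟪tl, tl⟫ = (1 : ℂ) := by
      rw [inner_self_eq_norm_sq_to_K, htln]; norm_num
    have hx0tl : ⟪x0, tl⟫ = 0 := htlo x0 hx0
    have htlx0 : ⟪tl, x0⟫ = 0 := by rw [← inner_conj_symm, hx0tl, map_zero]
    have ha : a = ⟪tl, zK⟫ := by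
      rw [← hsum, inner_add_right, htlx0, zero_add, inner_smul_right, htl1, mul_one]
    -- dimension bound on K_k
    have hdimK : Module.finrank ℂ (KS T r0 k) ≤ k := by
      set g : Fin k → H := fun i => (T ^ (i : ℕ)) r0 with hg
      have him : (fun i : ℕ => (T ^ i) r0) '' {i | i < k} = Set.range g := by
        ext x
        constructor
        · rintro ⟨i, hi, rfl⟩; exact ⟨⟨i, hi⟩, rfl⟩
        · rintro ⟨i, rfl⟩; exact ⟨i.1, i.2, rfl⟩
      have : KS T r0 k = span ℂ (Set.range g) := by rw [KS, him]
      rw [this]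
      refine le_trans (finrank_span_le_card (R := ℂ) (Set.range g)) ?_
      rw [Set.toFinset_range]
      exact le_trans (Finset.card_image_le) (by simp)
    set Vprev : Submodule ℂ H := span ℂ (z '' {i : Fin k | (i : ℕ) < k - 1}) with hVp
    have hVprevKS : Vprev ≤ KS T r0 k := by
      rw [h2]; exact hVprevle
    haveI : FiniteDimensional ℂ (KS T r0 k) :=
      FiniteDimensional.span_of_finite ℂ (Set.Finite.image _ (Set.finite_Iio k))
    haveI : FiniteDimensional ℂ Vprev :=
      FiniteDimensional.span_of_finite ℂ (Set.toFinite _)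
    have horthVprev : ∀ v ∈ Vprev, ⟪v, u⟫ = 0 := by
      intro v hv
      refine myInner_span_zero ?_ hv
      rintro _ ⟨i, hi, rfl⟩
      rw [hinner_u i, if_pos (by simpa using hi)]
    have hdimVprev : Module.finrank ℂ Vprev = k - 1 := by
      have heq : z '' {i : Fin k | (i : ℕ) < k - 1}
          = Set.range (fun i : {i : Fin k | (i : ℕ) < k - 1} => z i) :=
        Set.image_eq_range _ _
      have hli : LinearIndependent ℂ (fun i : {i : Fin k | (i : ℕ) < k - 1} => z i) :=
        hz.linearIndependent.comp _ Subtype.val_injective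
      rw [hVp, heq, finrank_span_eq_card hli]
      have e : {i : Fin k | (i : ℕ) < k - 1} ≃ Fin (k - 1) :=
        { toFun := fun i => ⟨i.1.1, i.2⟩
          invFun := fun j => ⟨⟨j.1, lt_of_lt_of_le j.2 (Nat.sub_le k 1)⟩, j.2⟩
          left_inv := fun i => by apply Subtype.ext; apply Fin.ext; rfl
          right_inv := fun j => rfl }
      rw [Fintype.card_congr e, Fintype.card_fin]
    have hdimu : Module.finrank ℂ (ℂ ∙ u) = 1 := finrank_span_singleton hu0
    have hinf : Vprev ⊓ (ℂ ∙ u) = ⊥ := by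
      rw [eq_bot_iff]
      intro x hx
      rw [Submodule.mem_inf] at hx
      obtain ⟨hx1, hx2⟩ := hx
      rw [Submodule.mem_span_singleton] at hx2
      obtain ⟨e, rfl⟩ := hx2
      have h0 : (starRingEnd ℂ) e * ⟪u, u⟫ = 0 := by
        rw [← inner_smul_left]; exact horthVprev _ hx1
      rcases mul_eq_zero.mp h0 with he | hiu
      · have : e = 0 := by simpa using he
        simp [this]
      · exact absurd (inner_self_eq_zero.mp hiu) hu0
    have hsup_le : Vprev ⊔ (ℂ ∙ u) ≤ KS T r0 k :=
      sup_le hVprevKS ((Submodule.span_singleton_le_iff_mem _ _).2 humem)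
    have hdimsup : Module.finrank ℂ ↥(Vprev ⊔ (ℂ ∙ u)) = k := by
      have hd := Submodule.finrank_sup_add_finrank_inf_eq Vprev (ℂ ∙ u)
      rw [hinf, hdimVprev, hdimu, finrank_bot] at hd
      omega
    have hVu : Vprev ⊔ (ℂ ∙ u) = KS T r0 k :=
      Submodule.eq_of_le_of_finrank_le hsup_le (hdimK.trans_eq hdimsup.symm)
    have hx0sup : x0 ∈ Vprev ⊔ (ℂ ∙ u) := by rw [hVu]; exact hx0
    rw [Submodule.mem_sup] at hx0sup
    obtain ⟨v, hv, e, he, hve⟩ := hx0sup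
    rw [Submodule.mem_span_singleton] at he
    obtain ⟨b, rfl⟩ := he
    have hx0eq : x0 = zK - a • tl := by rw [← hsum]; abel
    have hx0z : ∀ jj : Fin k, (jj : ℕ) < k - 1 → ⟪z jj, x0⟫ = 0 := by
      intro jj hjj
      have hzz : ⟪z jj, zK⟫ = 0 := by
        refine hz.2 ?_
        intro hjK
        rw [hK1] at hjK
        have : (jj : ℕ) = k - 1 := by rw [hjK]
        omega
      have hztl : ⟪z jj, tl⟫ = 0 :=
        htlo _ (hVprevKS (subset_span ⟨jj, by simpa using hjj, rfl⟩))
      rw [hx0eq, inner_sub_right, hzz, inner_smul_right, hztl, mul_zero, sub_zero]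
    have hv0 : v = 0 := by
      have hvz : ∀ jj : Fin k, (jj : ℕ) < k - 1 → ⟪z jj, v⟫ = 0 := by
        intro jj hjj
        have h1' : ⟪z jj, v + b • u⟫ = 0 := by rw [hve]; exact hx0z jj hjj
        rwa [inner_add_right, inner_smul_right, hinner_u jj, if_pos hjj, mul_zero,
          add_zero] at h1'
      have hvv : ⟪v, v⟫ = 0 := by
        refine myInner_span_zero ?_ hv
        rintro _ ⟨i, hi, rfl⟩
        exact hvz i (by simpa using hi)
      exact inner_self_eq_zero.mp hvv
    have hx0b : x0 = b • u := by rw [← hve, hv0, zero_add]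
    have htlu : ⟪tl, u⟫ = 0 := by
      rw [← inner_conj_symm, htlo u humem, map_zero]
    have hbu : (starRingEnd ℂ) b * ((‖u‖ : ℂ) ^ 2) = ⟪zK, r0⟫ := by
      have hA1 : ⟪x0, u⟫ = (starRingEnd ℂ) b * ((‖u‖ : ℂ) ^ 2) := by
        rw [hx0b, inner_smul_left, inner_self_eq_norm_sq_to_K]
        norm_cast
      have hA2 : ⟪x0, u⟫ = ⟪zK, r0⟫ := by
        rw [hx0eq, inner_sub_left, inner_smul_left, htlu, mul_zero, sub_zero, hcK]
      exact hA1.symm.trans hA2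
    have hbnorm : ‖b‖ * ‖u‖ ^ 2 = ‖⟪zK, r0⟫‖ := by
      have hcn := congrArg norm hbu
      rwa [norm_mul, RCLike.norm_conj, norm_pow, Complex.norm_real, norm_norm] at hcn
    have hx0tl0 : ⟪x0, a • tl⟫ = 0 := by rw [inner_smul_right, hx0tl, mul_zero]
    have hzK1 : ‖zK‖ = 1 := hz.1 K1
    have hpyth : 1 = ‖b‖ ^ 2 * ‖u‖ ^ 2 + ‖a‖ ^ 2 := by
      have hns := norm_add_sq (𝕜 := ℂ) x0 (a • tl)
      rw [hx0tl0] at hns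
      simp only [map_zero, mul_zero, add_zero] at hns
      rw [hsum, hzK1, hx0b, norm_smul, norm_smul, htln, mul_one, one_pow] at hns
      rw [hns]; ring
    have hkey : ‖b‖ ^ 2 * ‖u‖ ^ 2 = 1 - ‖a‖ ^ 2 := by linarith [hpyth]
    have hkey2 : ‖b‖ ^ 2 * ‖u‖ ^ 4 = (1 - ‖a‖ ^ 2) * ‖u‖ ^ 2 := by
      rw [← hkey]; ring
    have hcn2 : ‖⟪zK, r0⟫‖ ^ 2 = ‖b‖ ^ 2 * ‖u‖ ^ 4 := by rw [← hbnorm]; ring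
    have hfinal2 : ‖ρ‖ ^ 2 = (‖a‖ * ‖u‖) ^ 2 := by
      rw [mul_pow]
      linarith [hnormρ2, hcn2, hkey2]
    have hatl : ‖a‖ = ‖⟪zK, tl⟫‖ := by rw [ha, norm_inner_symm]
    have hfinal : ‖ρ‖ = ‖⟪zK, tl⟫‖ * ‖u‖ := by
      rw [← hatl]
      exact (pow_left_inj₀ (norm_nonneg ρ)
        (mul_nonneg (norm_nonneg a) (norm_nonneg u)) two_ne_zero).mp hfinal2
    constructor
    · rw [EK, EP]; exact hfinal
    · intro lam
      rw [EK, EP, inner_sub_left, inner_smul_left, hAsymm, mul_zero, sub_zero]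
      exact hfinal
end
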